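/- arXiv:2001.07805 — 9 statements merged into one kernel-verified Lean document; each statement's English description precedes it below -/
import Mathlib

section
/- (Lemma 1) Let p* be a Borel probability measure on ℝ^d that is halfspace-symmetric with center μ* and has decay function h. Let α > 0 and let y ∈ ℝ^d satisfy D(y, p*) ≥ α. Then for every t ≥ 0 with h(t) < α, we have ‖y − μ*‖ ≤ t; equivalently, ‖y − μ*‖ ≤ h^{-1}(α), where h^{-1}(α) = inf{t ≥ 0 : h(t) < α}. -/
open MeasureTheory
open scoped RealInnerProductSpace ENNReal

noncomputable section

abbrev Euc (d : ℕ) := EuclideanSpace ℝ (Fin d)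

/-- Tukey depth of a point `μ` w.r.t. a measure `p`: the infimum over nonzero
directions `v` of the mass of the halfspace `{x | ⟪v, x - μ⟫ ≥ 0}`. -/
def tukeyDepth {d : ℕ} (μ : Euc d) (p : Measure (Euc d)) : ℝ :=
  ⨅ v : {v : Euc d // v ≠ 0}, (p {x | 0 ≤ ⟪(v : Euc d), x - μ⟫}).toReal

/-- `x` is a Tukey median of `p` if it maximizes the Tukey depth. -/
def IsTukeyMedian {d : ℕ} (x : Euc d) (p : Measure (Euc d)) : Prop :=
  ∀ y : Euc d, tukeyDepth y p ≤ tukeyDepth x p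

/-- Total variation distance: supremum over Borel sets `A` of `p A - q A`. -/
def tvDist {d : ℕ} (p q : Measure (Euc d)) : ℝ :=
  ⨆ A : {A : Set (Euc d) // MeasurableSet A}, ((p A).toReal - (q A).toReal)

/-- The halfspace metric `TV~(p, q)`. -/
def halfspaceDist {d : ℕ} (p q : Measure (Euc d)) : ℝ :=
  ⨆ vt : Euc d × ℝ,
    |(p {x | vt.2 ≤ ⟪vt.1, x⟫}).toReal - (q {x | vt.2 ≤ ⟪vt.1, x⟫}).toReal|

/-- Halfspace symmetry around `μ`: every one-dimensional projection of `X - μ`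
is symmetric in distribution. -/
def IsHalfspaceSymmetric {d : ℕ} (p : Measure (Euc d)) (μ : Euc d) : Prop :=
  ∀ v : Euc d,
    p.map (fun x => ⟪v, x - μ⟫) = p.map (fun x => -⟪v, x - μ⟫)

/-- Decay function `h(t)` of a measure `p` centered at `μ`. -/
def decay {d : ℕ} (p : Measure (Euc d)) (μ : Euc d) (t : ℝ) : ℝ :=
  ⨆ v : {v : Euc d // ‖v‖ ≤ 1}, (p {x | t < ⟪(v : Euc d), x - μ⟫}).toReal

/-- **Lemma 1.** If `p*` is halfspace-symmetric with center `μ*`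
and decay function `h`, `α > 0`, and `D(y, p*) ≥ α`, then for every `t ≥ 0` with
`h(t) < α` we have `‖y − μ*‖ ≤ t` (equivalently, `‖y − μ*‖ ≤ h⁻¹(α)`). -/
theorem norm_sub_le_of_tukeyDepth_ge {d : ℕ}
    (pstar : Measure (Euc d)) [IsProbabilityMeasure pstar]
    (μstar : Euc d) (hsym : IsHalfspaceSymmetric pstar μstar)
    (α : ℝ) (hα : 0 < α)
    (y : Euc d) (hy : α ≤ tukeyDepth y pstar) :
    ∀ t : ℝ, 0 ≤ t → decay pstar μstar t < α → ‖y - μstar‖ ≤ t := by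
  intro t ht hdec
  by_contra hlt
  push_neg at hlt
  have hr0 : 0 < ‖y - μstar‖ := ht.trans_lt hlt
  set r : ℝ := ‖y - μstar‖ with hrdef
  set v : Euc d := r⁻¹ • (y - μstar) with hvdef
  have hvnorm : ‖v‖ = 1 := by
    rw [hvdef, norm_smul, norm_inv, Real.norm_eq_abs, abs_of_pos hr0, ← hrdef,
      inv_mul_cancel₀ hr0.ne']
  have hv0 : v ≠ 0 := by
    intro h
    rw [h, norm_zero] at hvnorm
    exact one_ne_zero hvnorm.symm
  have hinner : ⟪v, y - μstar⟫ = r := by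
    rw [hvdef, real_inner_smul_left, real_inner_self_eq_norm_sq, ← hrdef]
    field_simp
  -- depth ≤ mass of the halfspace at y in direction v
  have h1 : tukeyDepth y pstar ≤ (pstar {x | 0 ≤ ⟪v, x - y⟫}).toReal := by
    have hb : BddBelow (Set.range fun w : {v : Euc d // v ≠ 0} =>
        (pstar {x | 0 ≤ ⟪(w : Euc d), x - y⟫}).toReal) :=
      ⟨0, fun x hx => by obtain ⟨w, rfl⟩ := hx; exact ENNReal.toReal_nonneg⟩
    exact ciInf_le hb (⟨v, hv0⟩ : {v : Euc d // v ≠ 0})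
  -- the halfspace is contained in the decay set
  have hsub : {x : Euc d | 0 ≤ ⟪v, x - y⟫} ⊆ {x : Euc d | t < ⟪v, x - μstar⟫} := by
    intro x hx
    simp only [Set.mem_setOf_eq] at hx ⊢
    have : ⟪v, x - y⟫ = ⟪v, x - μstar⟫ - ⟪v, y - μstar⟫ := by
      rw [← inner_sub_right]
      congr 1
      abel
    rw [this, hinner, sub_nonneg] at hx
    exact lt_of_lt_of_le hlt hx
  have h2 : (pstar {x | 0 ≤ ⟪v, x - y⟫}).toReal ≤
      (pstar {x | t < ⟪v, x - μstar⟫}).toReal :=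
    ENNReal.toReal_mono (measure_ne_top pstar _) (measure_mono hsub)
  have h3 : (pstar {x | t < ⟪v, x - μstar⟫}).toReal ≤ decay pstar μstar t := by
    have hbdd : BddAbove (Set.range fun w : {v : Euc d // ‖v‖ ≤ 1} =>
        (pstar {x | t < ⟪(w : Euc d), x - μstar⟫}).toReal) := by
      refine ⟨1, fun x hx => ?_⟩
      obtain ⟨w, rfl⟩ := hx
      have := ENNReal.toReal_mono (by simp) (prob_le_one (μ := pstar)
        (s := {x | t < ⟪(w : Euc d), x - μstar⟫}))
      simpa using this
    exact le_ciSup hbdd (⟨v, hvnorm.le⟩ : {v : Euc d // ‖v‖ ≤ 1})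
  have : α ≤ decay pstar μstar t :=
    hy.trans (h1.trans (h2.trans h3))
  exact absurd hdec (not_lt.mpr this)

end
end

section
/- (Theorem 2, TV corruption, general dimension) Let p* be a Borel probability measure on ℝ^d that is halfspace-symmetric with center μ* and has decay function h. Let p be a Borel probability measure with TV(p, p*) ≤ ε, and let x be a Tukey median of p. Then D(x, p*) ≥ 1 − h(0) − 2ε, and consequently for every t ≥ 0 with h(t) < 1 − h(0) − 2ε we have ‖x − μ*‖ ≤ t. -/
open MeasureTheory
open scoped RealInnerProductSpace ENNReal

noncomputable section

lemma toReal_prob_le_one {d : ℕ} (p : Measure (Euc d)) [IsProbabilityMeasure p]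
    (A : Set (Euc d)) : (p A).toReal ≤ 1 := by
  have h := prob_le_one (μ := p) (s := A)
  simpa using ENNReal.toReal_mono ENNReal.one_ne_top h

lemma inner_cont {d : ℕ} (v μ : Euc d) :
    Continuous fun x : Euc d => ⟪v, x - μ⟫ :=
  continuous_const.inner (continuous_id.sub continuous_const)

lemma hs_meas {d : ℕ} (v μ : Euc d) :
    MeasurableSet {x : Euc d | 0 ≤ ⟪v, x - μ⟫} :=
  measurableSet_le measurable_const (inner_cont v μ).measurable

lemma compl_toReal {d : ℕ} (q : Measure (Euc d)) [IsProbabilityMeasure q]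
    {A : Set (Euc d)} (hA : MeasurableSet A) :
    (q Aᶜ).toReal = 1 - (q A).toReal := by
  rw [prob_compl_eq_one_sub hA, ENNReal.toReal_sub_of_le prob_le_one ENNReal.one_ne_top]
  simp

lemma le_decay {d : ℕ} (p : Measure (Euc d)) [IsProbabilityMeasure p]
    (μ : Euc d) (t : ℝ) {u : Euc d} (hu : ‖u‖ ≤ 1) :
    (p {x | t < ⟪u, x - μ⟫}).toReal ≤ decay p μ t := by
  apply le_ciSup (f := fun v : {v : Euc d // ‖v‖ ≤ 1} =>
    (p {x | t < ⟪(v : Euc d), x - μ⟫}).toReal) _ ⟨u, hu⟩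
  exact ⟨1, by rintro _ ⟨v, rfl⟩; exact toReal_prob_le_one p _⟩

lemma sym_mass {d : ℕ} (p : Measure (Euc d))
    (μ : Euc d) (v : Euc d)
    (hsym : p.map (fun x => ⟪v, x - μ⟫) = p.map (fun x => -⟪v, x - μ⟫)) :
    p {x | ⟪v, x - μ⟫ < 0} = p {x | 0 < ⟪v, x - μ⟫} := by
  have hm : Measurable fun x : Euc d => ⟪v, x - μ⟫ := (inner_cont v μ).measurable
  have h1 : p.map (fun x => ⟪v, x - μ⟫) (Set.Ioi 0) = p {x | 0 < ⟪v, x - μ⟫} := by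
    rw [Measure.map_apply hm measurableSet_Ioi]; rfl
  have h2 : p.map (fun x => -⟪v, x - μ⟫) (Set.Ioi 0) = p {x | ⟪v, x - μ⟫ < 0} := by
    rw [Measure.map_apply (f := fun x : Euc d => -⟪v, x - μ⟫) hm.neg measurableSet_Ioi]
    congr 1; ext x; simp [neg_pos]
  rw [← h2, ← hsym, h1]

lemma halfspace_ge {d : ℕ} (p : Measure (Euc d)) [IsProbabilityMeasure p]
    (μ : Euc d) {v : Euc d} (hv : v ≠ 0)
    (hsym : p.map (fun x => ⟪v, x - μ⟫) = p.map (fun x => -⟪v, x - μ⟫)) :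
    1 - decay p μ 0 ≤ (p {x | 0 ≤ ⟪v, x - μ⟫}).toReal := by
  have hcompl : {x : Euc d | 0 ≤ ⟪v, x - μ⟫}ᶜ = {x | ⟪v, x - μ⟫ < 0} := by
    ext x; simp [not_le]
  have h1 : (p {x | ⟪v, x - μ⟫ < 0}).toReal = 1 - (p {x | 0 ≤ ⟪v, x - μ⟫}).toReal := by
    rw [← hcompl, compl_toReal p (hs_meas v μ)]
  have hvn : (0:ℝ) < ‖v‖ := norm_pos_iff.mpr hv
  set u : Euc d := ‖v‖⁻¹ • v with hu
  have hun : ‖u‖ ≤ 1 := by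
    rw [hu, norm_smul, norm_inv, norm_norm, inv_mul_cancel₀ hvn.ne']
  have hset : {x : Euc d | 0 < ⟪v, x - μ⟫} = {x | 0 < ⟪u, x - μ⟫} := by
    ext x
    simp only [Set.mem_setOf_eq, hu, real_inner_smul_left]
    constructor
    · intro h; positivity
    · intro h; nlinarith [inv_pos.mpr hvn]
  have h2 : (p {x | 0 < ⟪v, x - μ⟫}).toReal ≤ decay p μ 0 := by
    rw [hset]; exact le_decay p μ 0 hun
  have h3 := sym_mass p μ v hsym
  rw [h3] at h1
  linarith

lemma depth_bddBelow {d : ℕ} (μ : Euc d) (p : Measure (Euc d)) :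
    BddBelow (Set.range fun v : {v : Euc d // v ≠ 0} =>
      (p {x | 0 ≤ ⟪(v : Euc d), x - μ⟫}).toReal) :=
  ⟨0, by rintro _ ⟨v, rfl⟩; exact ENNReal.toReal_nonneg⟩

lemma tv_bound {d : ℕ} (p q : Measure (Euc d))
    [IsProbabilityMeasure p] [IsProbabilityMeasure q]
    {ε : ℝ} (htv : tvDist p q ≤ ε)
    {A : Set (Euc d)} (hA : MeasurableSet A) :
    (p A).toReal - (q A).toReal ≤ ε ∧ (q A).toReal - (p A).toReal ≤ ε := by
  have key : ∀ B : Set (Euc d), MeasurableSet B → (p B).toReal - (q B).toReal ≤ ε := by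
    intro B hB
    refine le_trans (le_ciSup (f := fun A : {A : Set (Euc d) // MeasurableSet A} =>
      ((p A).toReal - (q A).toReal)) ?_ ⟨B, hB⟩) htv
    refine ⟨1, ?_⟩
    rintro _ ⟨C, rfl⟩
    have := toReal_prob_le_one p (C : Set (Euc d))
    have h2 : (0:ℝ) ≤ (q (C : Set (Euc d))).toReal := ENNReal.toReal_nonneg
    dsimp only; linarith
  refine ⟨key A hA, ?_⟩
  have h1 := key Aᶜ hA.compl
  rw [compl_toReal p hA, compl_toReal q hA] at h1
  linarith

/-- **Theorem 2, TV corruption, general dimension.**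
If `p*` is halfspace-symmetric with center `μ*` and decay function `h`,
`TV(p, p*) ≤ ε`, and `x` is a Tukey median of `p`, then
`D(x, p*) ≥ 1 − h(0) − 2ε`, and consequently for every `t ≥ 0` with
`h(t) < 1 − h(0) − 2ε` we have `‖x − μ*‖ ≤ t`. -/
theorem tukey_median_tv_corruption {d : ℕ} (hd : 0 < d)
    (pstar p : Measure (Euc d))
    [IsProbabilityMeasure pstar] [IsProbabilityMeasure p]
    (μstar : Euc d) (hsym : IsHalfspaceSymmetric pstar μstar)
    (ε : ℝ) (htv : tvDist p pstar ≤ ε)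
    (x : Euc d) (hx : IsTukeyMedian x p) :
    1 - decay pstar μstar 0 - 2 * ε ≤ tukeyDepth x pstar ∧
    ∀ t : ℝ, 0 ≤ t → decay pstar μstar t < 1 - decay pstar μstar 0 - 2 * ε →
      ‖x - μstar‖ ≤ t := by
  have hne : (EuclideanSpace.single (⟨0, hd⟩ : Fin d) (1:ℝ)) ≠ 0 := by
    intro h
    have := congrArg (fun w : Euc d => w ⟨0, hd⟩) h
    simp [EuclideanSpace.single_apply] at this
  haveI : Nonempty {v : Euc d // v ≠ 0} := ⟨⟨_, hne⟩⟩
  have hcomp : ∀ y : Euc d,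
      tukeyDepth y pstar - ε ≤ tukeyDepth y p ∧
      tukeyDepth y p - ε ≤ tukeyDepth y pstar := by
    intro y
    constructor
    · rw [tukeyDepth]
      apply le_ciInf; intro v
      have h1 := ciInf_le (depth_bddBelow y pstar) v
      have h2 := (tv_bound p pstar htv (hs_meas (v:Euc d) y)).2
      linarith
    · rw [tukeyDepth]
      apply le_ciInf; intro v
      have h1 := ciInf_le (depth_bddBelow y p) v
      have h2 := (tv_bound p pstar htv (hs_meas (v:Euc d) y)).1
      linarith
  have hstar : 1 - decay pstar μstar 0 ≤ tukeyDepth μstar pstar := by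
    rw [tukeyDepth]
    apply le_ciInf; intro v
    exact halfspace_ge pstar μstar v.2 (hsym v)
  have hmain : 1 - decay pstar μstar 0 - 2*ε ≤ tukeyDepth x pstar := by
    have h1 := (hcomp μstar).1
    have h2 := hx μstar
    have h3 := (hcomp x).2
    linarith
  refine ⟨hmain, ?_⟩
  intro t ht hdec
  by_contra hcon
  push_neg at hcon
  set v := x - μstar with hv
  have hvn : 0 < ‖v‖ := lt_of_le_of_lt ht hcon
  have hvne : v ≠ 0 := norm_pos_iff.mp hvn
  have hdx : tukeyDepth x pstar ≤ (pstar {y | 0 ≤ ⟪v, y - x⟫}).toReal :=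
    ciInf_le (depth_bddBelow x pstar) ⟨v, hvne⟩
  set u : Euc d := ‖v‖⁻¹ • v with hu
  have hun : ‖u‖ ≤ 1 := by
    rw [hu, norm_smul, norm_inv, norm_norm, inv_mul_cancel₀ hvn.ne']
  have hsub : {y : Euc d | 0 ≤ ⟪v, y - x⟫} ⊆ {y | t < ⟪u, y - μstar⟫} := by
    intro y hy
    simp only [Set.mem_setOf_eq] at hy ⊢
    have hinner : ⟪v, y - x⟫ = ⟪v, y - μstar⟫ - ‖v‖^2 := by
      have hyx : y - x = (y - μstar) - v := by rw [hv]; abel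
      rw [hyx, inner_sub_right, real_inner_self_eq_norm_sq]
    have h5 : ‖v‖^2 ≤ ⟪v, y - μstar⟫ := by linarith
    have h6 : ⟪u, y - μstar⟫ = ‖v‖⁻¹ * ⟪v, y - μstar⟫ := by
      rw [hu, real_inner_smul_left]
    rw [h6]
    calc t < ‖v‖ := hcon
      _ = ‖v‖⁻¹ * ‖v‖^2 := by field_simp
      _ ≤ ‖v‖⁻¹ * ⟪v, y - μstar⟫ :=
        mul_le_mul_of_nonneg_left h5 (inv_nonneg.mpr hvn.le)
  have h6 : (pstar {y | 0 ≤ ⟪v, y - x⟫}).toReal ≤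
      (pstar {y | t < ⟪u, y - μstar⟫}).toReal :=
    ENNReal.toReal_mono (measure_ne_top _ _) (measure_mono hsub)
  have h7 := le_decay pstar μstar t hun
  linarith


end
end

section
/- (Theorem 2, TV corruption, dimension one) Let p* be a Borel probability measure on ℝ that is halfspace-symmetric with center μ* and has decay function h. Let p be a Borel probability measure on ℝ with TV(p, p*) ≤ ε, and let x be a Tukey median of p. Then D(x, p*) ≥ max(1 − h(0) − 2ε, 1/2 − ε), and consequently for every t ≥ 0 with h(t) < max(1 − h(0) − 2ε, 1/2 − ε) we have |x − μ*| ≤ t. -/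
open MeasureTheory
open scoped ENNReal

noncomputable section

/-- One-dimensional Tukey depth: `min (p [μ, ∞)) (p (-∞, μ])`. -/
def tukeyDepth1 (μ : ℝ) (p : Measure ℝ) : ℝ :=
  min (p (Set.Ici μ)).toReal (p (Set.Iic μ)).toReal

/-- `x` is a Tukey median (in dimension one) of `p`. -/
def IsTukeyMedian1 (x : ℝ) (p : Measure ℝ) : Prop :=
  ∀ y : ℝ, tukeyDepth1 y p ≤ tukeyDepth1 x p

/-- Total variation distance on `ℝ`: supremum over Borel sets `A` of `p A - q A`. -/
def tvDist1 (p q : Measure ℝ) : ℝ :=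
  ⨆ A : {A : Set ℝ // MeasurableSet A}, ((p A).toReal - (q A).toReal)

/-- Halfspace symmetry on `ℝ` around `μ`: every projection `v * (x - μ)` is
symmetric in distribution. -/
def IsHalfspaceSymmetric1 (p : Measure ℝ) (μ : ℝ) : Prop :=
  ∀ v : ℝ, p.map (fun x => v * (x - μ)) = p.map (fun x => -(v * (x - μ)))

/-- Decay function on `ℝ` centered at `μ`. -/
def decay1 (p : Measure ℝ) (μ : ℝ) (t : ℝ) : ℝ :=
  ⨆ v : {v : ℝ // |v| ≤ 1}, (p {x | t < (v : ℝ) * (x - μ)}).toReal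

section Aux

open Filter Topology

lemma aux_toReal_le_one (p : Measure ℝ) [IsProbabilityMeasure p] (A : Set ℝ) :
    (p A).toReal ≤ 1 := by
  simpa using ENNReal.toReal_mono ENNReal.one_ne_top (prob_le_one (μ := p) (s := A))

lemma aux_toReal_compl (p : Measure ℝ) [IsProbabilityMeasure p] {A : Set ℝ}
    (hA : MeasurableSet A) : (p Aᶜ).toReal = 1 - (p A).toReal := by
  rw [prob_compl_eq_one_sub hA, ENNReal.toReal_sub_of_le prob_le_one ENNReal.one_ne_top,
    ENNReal.toReal_one]

lemma aux_tv_bound {p q : Measure ℝ} [IsProbabilityMeasure p] [IsProbabilityMeasure q]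
    {ε : ℝ} (h : tvDist1 p q ≤ ε) {A : Set ℝ} (hA : MeasurableSet A) :
    (p A).toReal - (q A).toReal ≤ ε := by
  refine le_trans ?_ h
  have hbdd : BddAbove (Set.range fun A : {A : Set ℝ // MeasurableSet A} =>
      ((p A).toReal - (q A).toReal)) := by
    refine ⟨1, ?_⟩
    rintro _ ⟨B, rfl⟩
    dsimp only
    have h1 := aux_toReal_le_one p B
    have h2 := ENNReal.toReal_nonneg (a := q B)
    linarith
  exact le_ciSup hbdd ⟨A, hA⟩

lemma aux_tv_bound' {p q : Measure ℝ} [IsProbabilityMeasure p] [IsProbabilityMeasure q]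
    {ε : ℝ} (h : tvDist1 p q ≤ ε) {A : Set ℝ} (hA : MeasurableSet A) :
    (q A).toReal - (p A).toReal ≤ ε := by
  have := aux_tv_bound h hA.compl
  rw [aux_toReal_compl p hA, aux_toReal_compl q hA] at this
  linarith

lemma aux_le_decay (pstar : Measure ℝ) [IsProbabilityMeasure pstar] (μ t : ℝ)
    {v : ℝ} (hv : |v| ≤ 1) :
    (pstar {x | t < v * (x - μ)}).toReal ≤ decay1 pstar μ t := by
  have hbdd : BddAbove (Set.range fun v : {v : ℝ // |v| ≤ 1} =>
      (pstar {x | t < (v : ℝ) * (x - μ)}).toReal) := by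
    refine ⟨1, ?_⟩
    rintro _ ⟨w, rfl⟩
    exact aux_toReal_le_one pstar _
  exact le_ciSup hbdd ⟨v, hv⟩

lemma aux_exists_median (p : Measure ℝ) [IsProbabilityMeasure p] :
    ∃ m : ℝ, ENNReal.ofReal (1/2) ≤ p (Set.Iic m) ∧ ENNReal.ofReal (1/2) ≤ p (Set.Ici m) := by
  set S : Set ℝ := {y : ℝ | ENNReal.ofReal (1/2) ≤ p (Set.Iic y)} with hS
  have hne : S.Nonempty := by
    have ht := tendsto_measure_Iic_atTop (μ := p)
    rw [measure_univ] at ht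
    have : ∀ᶠ y in atTop, ENNReal.ofReal (1/2) ≤ p (Set.Iic y) :=
      ht.eventually_const_le (by rw [ENNReal.ofReal_lt_one]; norm_num)
    obtain ⟨y, hy⟩ := this.exists
    exact ⟨y, hy⟩
  have hbdd : BddBelow S := by
    have ht : Tendsto (fun n : ℕ => p (Set.Iic (-(n:ℝ)))) atTop
        (𝓝 (p (⋂ n : ℕ, Set.Iic (-(n:ℝ))))) := by
      refine tendsto_measure_iInter_atTop (fun n => measurableSet_Iic.nullMeasurableSet) ?_
        ⟨0, measure_ne_top _ _⟩
      intro a b hab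
      exact Set.Iic_subset_Iic.2 (by exact_mod_cast neg_le_neg (Nat.cast_le.2 hab))
    have hempty : (⋂ n : ℕ, Set.Iic (-(n:ℝ))) = ∅ := by
      ext y
      simp only [Set.mem_iInter, Set.mem_Iic, Set.mem_empty_iff_false, iff_false, not_forall]
      obtain ⟨n, hn⟩ := exists_nat_gt (-y)
      exact ⟨n, by push_neg; linarith⟩
    rw [hempty, measure_empty] at ht
    have : ∀ᶠ n : ℕ in atTop, p (Set.Iic (-(n:ℝ))) < ENNReal.ofReal (1/2) :=
      ht.eventually_lt_const (by positivity)
    obtain ⟨n, hn⟩ := this.exists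
    refine ⟨-(n:ℝ), fun s hs => ?_⟩
    by_contra hlt
    push_neg at hlt
    exact absurd hs (not_le.2 (lt_of_le_of_lt (measure_mono (Set.Iic_subset_Iic.2 hlt.le)) hn))
  set m := sInf S with hm
  refine ⟨m, ?_, ?_⟩
  · have hset : Set.Iic m = ⋂ n : ℕ, Set.Iic (m + ((n:ℝ)+1)⁻¹) := by
      ext y
      simp only [Set.mem_iInter, Set.mem_Iic]
      constructor
      · intro h n
        have : (0:ℝ) < ((n:ℝ)+1)⁻¹ := by positivity
        linarith
      · intro h
        by_contra hlt
        push_neg at hlt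
        obtain ⟨n, hn⟩ := exists_nat_one_div_lt (show (0:ℝ) < y - m by linarith)
        have := h n
        rw [one_div] at hn
        linarith
    have hanti : Antitone (fun n : ℕ => Set.Iic (m + ((n:ℝ)+1)⁻¹)) := by
      intro a b hab
      refine Set.Iic_subset_Iic.2 ?_
      have : ((b:ℝ)+1)⁻¹ ≤ ((a:ℝ)+1)⁻¹ := by
        apply inv_anti₀ (by positivity)
        exact_mod_cast add_le_add_left (Nat.cast_le.2 hab) 1
      linarith
    rw [hset, hanti.measure_iInter (fun n => measurableSet_Iic.nullMeasurableSet)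
      ⟨0, measure_ne_top _ _⟩]
    refine le_iInf fun n => ?_
    have hlt : m < m + ((n:ℝ)+1)⁻¹ := by
      have : (0:ℝ) < ((n:ℝ)+1)⁻¹ := by positivity
      linarith
    obtain ⟨s, hsS, hs⟩ := (csInf_lt_iff hbdd hne).1 hlt
    exact le_trans hsS (measure_mono (Set.Iic_subset_Iic.2 hs.le))
  · have hset2 : Set.Iio m = ⋃ n : ℕ, Set.Iic (m - ((n:ℝ)+1)⁻¹) := by
      ext y
      simp only [Set.mem_iUnion, Set.mem_Iic, Set.mem_Iio]
      constructor
      · rintro h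
        obtain ⟨n, hn⟩ := exists_nat_one_div_lt (show (0:ℝ) < m - y by linarith)
        rw [one_div] at hn
        exact ⟨n, by linarith⟩
      · rintro ⟨n, hn⟩
        have : (0:ℝ) < ((n:ℝ)+1)⁻¹ := by positivity
        linarith
    have hmono : Monotone (fun n : ℕ => Set.Iic (m - ((n:ℝ)+1)⁻¹)) := by
      intro a b hab
      refine Set.Iic_subset_Iic.2 ?_
      have : ((b:ℝ)+1)⁻¹ ≤ ((a:ℝ)+1)⁻¹ := by
        apply inv_anti₀ (by positivity)
        exact_mod_cast add_le_add_left (Nat.cast_le.2 hab) 1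
      linarith
    have hIio : p (Set.Iio m) ≤ ENNReal.ofReal (1/2) := by
      rw [hset2, hmono.measure_iUnion]
      refine iSup_le fun n => ?_
      have hnot : m - ((n:ℝ)+1)⁻¹ ∉ S := by
        intro hmem
        have := csInf_le hbdd hmem
        have hpos : (0:ℝ) < ((n:ℝ)+1)⁻¹ := by positivity
        rw [← hm] at this
        linarith
      exact le_of_not_ge (by simpa [hS] using hnot)
    have hcompl : Set.Ici m = (Set.Iio m)ᶜ := by simp
    rw [hcompl, prob_compl_eq_one_sub measurableSet_Iio]
    calc ENNReal.ofReal (1/2) = 1 - ENNReal.ofReal (1/2) := by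
          rw [show (1:ℝ≥0∞) = ENNReal.ofReal 1 by simp, ← ENNReal.ofReal_sub _ (by norm_num)]
          norm_num
      _ ≤ 1 - p (Set.Iio m) := tsub_le_tsub_left hIio 1

end Aux

/-- **Theorem 2, TV corruption, dimension one.**
If `p*` on `ℝ` is halfspace-symmetric with center `μ*` and decay function `h`,
`TV(p, p*) ≤ ε`, and `x` is a Tukey median of `p`, then
`D(x, p*) ≥ max(1 − h(0) − 2ε, 1/2 − ε)`, and consequently for every `t ≥ 0`
with `h(t) < max(1 − h(0) − 2ε, 1/2 − ε)` we have `|x − μ*| ≤ t`. -/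
theorem tukey_median_tv_corruption_dim_one
    (pstar p : Measure ℝ)
    [IsProbabilityMeasure pstar] [IsProbabilityMeasure p]
    (μstar : ℝ) (hsym : IsHalfspaceSymmetric1 pstar μstar)
    (ε : ℝ) (htv : tvDist1 p pstar ≤ ε)
    (x : ℝ) (hx : IsTukeyMedian1 x p) :
    max (1 - decay1 pstar μstar 0 - 2 * ε) (1 / 2 - ε) ≤ tukeyDepth1 x pstar ∧
    ∀ t : ℝ, 0 ≤ t →
      decay1 pstar μstar t < max (1 - decay1 pstar μstar 0 - 2 * ε) (1 / 2 - ε) →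
      |x - μstar| ≤ t := by
  set h0 := decay1 pstar μstar 0 with hh0
  -- depth of x under p is at least depth of x under pstar minus ε, etc.
  have hIci_x : (p (Set.Ici x)).toReal - (pstar (Set.Ici x)).toReal ≤ ε :=
    aux_tv_bound htv measurableSet_Ici
  have hIic_x : (p (Set.Iic x)).toReal - (pstar (Set.Iic x)).toReal ≤ ε :=
    aux_tv_bound htv measurableSet_Iic
  have hdepth_x : tukeyDepth1 x p - ε ≤ tukeyDepth1 x pstar := by
    unfold tukeyDepth1 at *
    rcases le_total (pstar (Set.Ici x)).toReal (pstar (Set.Iic x)).toReal with hc | hc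
    · have := min_le_left (p (Set.Ici x)).toReal (p (Set.Iic x)).toReal
      simp only [min_eq_left hc]
      linarith
    · have := min_le_right (p (Set.Ici x)).toReal (p (Set.Iic x)).toReal
      simp only [min_eq_right hc]
      linarith
  -- part 1a : 1 - h0 - 2ε
  have hIci_star : 1 - h0 ≤ (pstar (Set.Ici μstar)).toReal := by
    have hset : Set.Ici μstar = {y : ℝ | (0:ℝ) < (-1) * (y - μstar)}ᶜ := by
      ext y
      simp only [Set.mem_Ici, Set.mem_compl_iff, Set.mem_setOf_eq, neg_one_mul, not_lt]
      constructor
      · intro hy; linarith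
      · intro hy; linarith
    have hmeas : MeasurableSet {y : ℝ | (0:ℝ) < (-1) * (y - μstar)} := by
      have : {y : ℝ | (0:ℝ) < (-1) * (y - μstar)} = Set.Iio μstar := by
        ext y
        simp only [Set.mem_setOf_eq, Set.mem_Iio, neg_one_mul]
        constructor <;> intro hy <;> linarith
      rw [this]; exact measurableSet_Iio
    rw [hset, aux_toReal_compl pstar hmeas]
    have := aux_le_decay pstar μstar 0 (v := -1) (by norm_num)
    rw [← hh0] at this
    linarith
  have hIic_star : 1 - h0 ≤ (pstar (Set.Iic μstar)).toReal := by
    have hset : Set.Iic μstar = {y : ℝ | (0:ℝ) < (1:ℝ) * (y - μstar)}ᶜ := by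
      ext y
      simp only [Set.mem_Iic, Set.mem_compl_iff, Set.mem_setOf_eq, one_mul, not_lt]
      constructor
      · intro hy; linarith
      · intro hy; linarith
    have hmeas : MeasurableSet {y : ℝ | (0:ℝ) < (1:ℝ) * (y - μstar)} := by
      have : {y : ℝ | (0:ℝ) < (1:ℝ) * (y - μstar)} = Set.Ioi μstar := by
        ext y
        simp only [Set.mem_setOf_eq, Set.mem_Ioi, one_mul]
        constructor <;> intro hy <;> linarith
      rw [this]; exact measurableSet_Ioi
    rw [hset, aux_toReal_compl pstar hmeas]
    have := aux_le_decay pstar μstar 0 (v := 1) (by norm_num)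
    rw [← hh0] at this
    linarith
  have hdepth_star_center : 1 - h0 ≤ tukeyDepth1 μstar pstar :=
    le_min hIci_star hIic_star
  have hcenter_p : tukeyDepth1 μstar pstar - ε ≤ tukeyDepth1 μstar p := by
    have h1 : (pstar (Set.Ici μstar)).toReal - (p (Set.Ici μstar)).toReal ≤ ε :=
      aux_tv_bound' htv measurableSet_Ici
    have h2 : (pstar (Set.Iic μstar)).toReal - (p (Set.Iic μstar)).toReal ≤ ε :=
      aux_tv_bound' htv measurableSet_Iic
    unfold tukeyDepth1
    rcases le_total (p (Set.Ici μstar)).toReal (p (Set.Iic μstar)).toReal with hc | hc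
    · have := min_le_left (pstar (Set.Ici μstar)).toReal (pstar (Set.Iic μstar)).toReal
      simp only [min_eq_left hc]
      linarith
    · have := min_le_right (pstar (Set.Ici μstar)).toReal (pstar (Set.Iic μstar)).toReal
      simp only [min_eq_right hc]
      linarith
  have hpart1a : 1 - h0 - 2 * ε ≤ tukeyDepth1 x pstar := by
    have := hx μstar
    linarith
  -- part 1b : 1/2 - ε, via a median of p
  have hpart1b : 1 / 2 - ε ≤ tukeyDepth1 x pstar := by
    obtain ⟨m, hm1, hm2⟩ := aux_exists_median p
    have hm1' : (1:ℝ)/2 ≤ (p (Set.Iic m)).toReal :=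
      (ENNReal.ofReal_le_iff_le_toReal (measure_ne_top _ _)).1 hm1
    have hm2' : (1:ℝ)/2 ≤ (p (Set.Ici m)).toReal :=
      (ENNReal.ofReal_le_iff_le_toReal (measure_ne_top _ _)).1 hm2
    have hdm : (1:ℝ)/2 ≤ tukeyDepth1 m p := le_min hm2' hm1'
    have := hx m
    linarith
  have hmain : max (1 - h0 - 2 * ε) (1 / 2 - ε) ≤ tukeyDepth1 x pstar :=
    max_le hpart1a hpart1b
  refine ⟨hmain, fun t ht hdecay => ?_⟩
  by_contra habs
  push_neg at habs
  rcases lt_abs.1 habs with hgt | hgt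
  · -- x - μstar > t, use the right halfline
    have hsub : Set.Ici x ⊆ {y : ℝ | t < (1:ℝ) * (y - μstar)} := by
      intro y hy
      simp only [Set.mem_setOf_eq, one_mul]
      have : x ≤ y := hy
      linarith
    have hle : (pstar (Set.Ici x)).toReal ≤ decay1 pstar μstar t := by
      refine le_trans ?_ (aux_le_decay pstar μstar t (v := 1) (by norm_num))
      exact ENNReal.toReal_mono (measure_ne_top _ _) (measure_mono hsub)
    have hdep : tukeyDepth1 x pstar ≤ (pstar (Set.Ici x)).toReal := min_le_left _ _
    linarith
  · -- -(x - μstar) > t, use the left halfline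
    have hsub : Set.Iic x ⊆ {y : ℝ | t < (-1:ℝ) * (y - μstar)} := by
      intro y hy
      simp only [Set.mem_setOf_eq, neg_one_mul]
      have : y ≤ x := hy
      linarith
    have hle : (pstar (Set.Iic x)).toReal ≤ decay1 pstar μstar t := by
      refine le_trans ?_ (aux_le_decay pstar μstar t (v := -1) (by norm_num))
      exact ENNReal.toReal_mono (measure_ne_top _ _) (measure_mono hsub)
    have hdep : tukeyDepth1 x pstar ≤ (pstar (Set.Iic x)).toReal := min_le_right _ _
    linarith

end
end

section
/- (Breakdown point lower bound, TV corruption) Let p* be a Borel probability measure on ℝ^d that is halfspace-symmetric with center μ*, and let 0 ≤ ε < 1/4. Then there exists a finite constant B such that for every Borel probability measure p on ℝ^d with TV(p, p*) ≤ ε and every Tukey median x of p, ‖x − μ*‖ ≤ B. (Hence the breakdown point of the Tukey median under TV corruption is at least 1/4 for every halfspace-symmetric distribution.) -/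
open MeasureTheory
open scoped RealInnerProductSpace ENNReal

noncomputable section

/-- The linear functional `y ↦ ⟪v, y - μ⟫` is measurable. -/
lemma inner_sub_measurable {d : ℕ} (v μ : Euc d) :
    Measurable (fun y : Euc d => ⟪v, y - μ⟫) := by
  exact (continuous_const.inner (continuous_id.sub continuous_const)).measurable

/-- `tvDist` bounds `p A - q A` for measurable `A`. -/
lemma tv_term_le {d : ℕ} (p q : Measure (Euc d)) [IsProbabilityMeasure p]
    {A : Set (Euc d)} (hA : MeasurableSet A) :
    (p A).toReal - (q A).toReal ≤ tvDist p q := by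
  have hbdd : BddAbove (Set.range fun A : {A : Set (Euc d) // MeasurableSet A} =>
      ((p (A : Set (Euc d))).toReal - (q (A : Set (Euc d))).toReal)) := by
    refine ⟨1, ?_⟩
    rintro _ ⟨⟨B, hB⟩, rfl⟩
    have h1 : (p B).toReal ≤ 1 := by
      have := prob_le_one (μ := p) (s := B)
      simpa using ENNReal.toReal_le_toReal (measure_ne_top p B) (by simp) |>.mpr this
    have h2 : 0 ≤ (q B).toReal := ENNReal.toReal_nonneg
    simp only []
    linarith
  exact le_ciSup hbdd ⟨A, hA⟩

/-- Halfspace symmetry implies every closed halfspace through the center has mass ≥ 1/2. -/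
lemma half_mass {d : ℕ} (p : Measure (Euc d)) [IsProbabilityMeasure p]
    (μ : Euc d) (hsym : IsHalfspaceSymmetric p μ) (w : Euc d) :
    (1 : ℝ) / 2 ≤ (p {y | 0 ≤ ⟪w, y - μ⟫}).toReal := by
  set f : Euc d → ℝ := fun y => ⟪w, y - μ⟫ with hf
  have hfm : Measurable f := inner_sub_measurable w μ
  have hA : {y : Euc d | 0 ≤ f y} = f ⁻¹' Set.Ici 0 := rfl
  have hAB : p {y | 0 ≤ f y} = p {y | f y ≤ 0} := by
    have h := hsym w
    have h1 : (p.map f) (Set.Ici 0) = p (f ⁻¹' Set.Ici 0) :=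
      Measure.map_apply hfm measurableSet_Ici
    have h2 : (p.map (fun y => -f y)) (Set.Ici 0) = p ((fun y => -f y) ⁻¹' Set.Ici 0) :=
      Measure.map_apply hfm.neg measurableSet_Ici
    have h3 : ((fun y => -f y) ⁻¹' Set.Ici 0) = {y | f y ≤ 0} := by
      ext y; simp [neg_nonneg]
    rw [hA, ← h1, h, h2, h3]
  have hcover : {y : Euc d | 0 ≤ f y} ∪ {y | f y ≤ 0} = Set.univ := by
    ext y; simp [le_total 0 (f y)]
  have hle : (1 : ℝ≥0∞) ≤ p {y | 0 ≤ f y} + p {y | f y ≤ 0} := by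
    calc (1 : ℝ≥0∞) = p Set.univ := (measure_univ).symm
      _ = p ({y : Euc d | 0 ≤ f y} ∪ {y | f y ≤ 0}) := by rw [hcover]
      _ ≤ _ := measure_union_le _ _
  have hfin1 := measure_ne_top p {y : Euc d | 0 ≤ f y}
  have hfin2 := measure_ne_top p {y : Euc d | f y ≤ 0}
  have hreal : (1 : ℝ) ≤ (p {y : Euc d | 0 ≤ f y}).toReal + (p {y | f y ≤ 0}).toReal := by
    have := ENNReal.toReal_le_toReal (by simp) (by
      simp [ENNReal.add_ne_top, hfin1, hfin2]) |>.mpr hle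
    rwa [ENNReal.toReal_one, ENNReal.toReal_add hfin1 hfin2] at this
  have heq : (p {y : Euc d | 0 ≤ f y}).toReal = (p {y | f y ≤ 0}).toReal := by rw [hAB]
  rw [← heq] at hreal
  linarith

/-- `p A ≥ q A - ε` from the one-sided TV bound, via complements. -/
lemma tv_lower {d : ℕ} (p q : Measure (Euc d)) [IsProbabilityMeasure p]
    [IsProbabilityMeasure q] {ε : ℝ} (htv : tvDist p q ≤ ε)
    {A : Set (Euc d)} (hA : MeasurableSet A) :
    (q A).toReal - ε ≤ (p A).toReal := by
  have h := (tv_term_le p q hA.compl).trans htv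
  have hc1 : (p Aᶜ).toReal = 1 - (p A).toReal := by
    rw [prob_compl_eq_one_sub hA, ENNReal.toReal_sub_of_le prob_le_one (by simp),
      ENNReal.toReal_one]
  have hc2 : (q Aᶜ).toReal = 1 - (q A).toReal := by
    rw [prob_compl_eq_one_sub hA, ENNReal.toReal_sub_of_le prob_le_one (by simp),
      ENNReal.toReal_one]
  rw [hc1, hc2] at h
  linarith

/-- **Breakdown point lower bound, TV corruption.**
If `p*` is halfspace-symmetric with center `μ*` and `0 ≤ ε < 1/4`, then there is
a finite constant `B` such that every Tukey median of any `p` with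
`TV(p, p*) ≤ ε` is within distance `B` of `μ*`. -/
theorem tukey_breakdown_tv {d : ℕ}
    (pstar : Measure (Euc d)) [IsProbabilityMeasure pstar]
    (μstar : Euc d) (hsym : IsHalfspaceSymmetric pstar μstar)
    (ε : ℝ) (hε0 : 0 ≤ ε) (hε : ε < 1 / 4) :
    ∃ B : ℝ, ∀ p : Measure (Euc d), IsProbabilityMeasure p →
      tvDist p pstar ≤ ε →
      ∀ x : Euc d, IsTukeyMedian x p → ‖x - μstar‖ ≤ B := by
  have hgap : (0 : ℝ) < 1 / 2 - 2 * ε := by linarith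
  -- Choose B = n with pstar tail mass < 1/2 - 2ε.
  set s : ℕ → Set (Euc d) := fun n => {y | (n : ℝ) < ‖y - μstar‖} with hs
  have hmeas : ∀ n, MeasurableSet (s n) := by
    intro n
    exact measurableSet_lt measurable_const
      ((continuous_id.sub continuous_const).norm.measurable)
  have hanti : Antitone s := by
    intro m n hmn y hy
    simp only [hs, Set.mem_setOf_eq] at hy ⊢
    exact lt_of_le_of_lt (by exact_mod_cast hmn) hy
  have hempty : (⋂ n, s n) = (∅ : Set (Euc d)) := by
    ext y
    simp only [Set.mem_iInter, hs, Set.mem_setOf_eq, Set.mem_empty_iff_false, iff_false,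
      not_forall, not_lt]
    obtain ⟨n, hn⟩ := exists_nat_gt ‖y - μstar‖
    exact ⟨n, hn.le⟩
  have htend : Filter.Tendsto (fun n => pstar (s n)) Filter.atTop (nhds 0) := by
    have := MeasureTheory.tendsto_measure_iInter_atTop
      (μ := pstar) (s := s) (fun n => (hmeas n).nullMeasurableSet) hanti
      ⟨0, measure_ne_top _ _⟩
    rwa [hempty, measure_empty] at this
  have hpos : (0 : ℝ≥0∞) < ENNReal.ofReal (1 / 2 - 2 * ε) := by
    exact ENNReal.ofReal_pos.mpr hgap
  obtain ⟨n, hn⟩ : ∃ n : ℕ, pstar (s n) < ENNReal.ofReal (1 / 2 - 2 * ε) := by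
    exact (htend.eventually_lt_const hpos).exists
  have hn' : (pstar (s n)).toReal < 1 / 2 - 2 * ε := ENNReal.toReal_lt_of_lt_ofReal hn
  refine ⟨n, ?_⟩
  intro p hp htv x hmed
  by_contra hB
  push_neg at hB
  set v : Euc d := x - μstar with hv
  have hvn : (n : ℝ) < ‖v‖ := hB
  have hv0 : v ≠ 0 := by
    intro h
    rw [h, norm_zero] at hvn
    exact absurd hvn (not_lt.mpr (Nat.cast_nonneg n))
  haveI : Nonempty {w : Euc d // w ≠ 0} := ⟨⟨v, hv0⟩⟩
  -- Lower bound on depth of μstar under p.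
  have hlow : 1 / 2 - ε ≤ tukeyDepth μstar p := by
    refine le_ciInf ?_
    rintro ⟨w, hw⟩
    have hmA : MeasurableSet {y : Euc d | 0 ≤ ⟪w, y - μstar⟫} :=
      (inner_sub_measurable w μstar) measurableSet_Ici
    have h1 := half_mass pstar μstar hsym w
    have h2 := tv_lower p pstar htv hmA
    linarith
  -- Upper bound on depth of x under p via direction v.
  have hbb : BddBelow (Set.range fun w : {w : Euc d // w ≠ 0} =>
      (p {y | 0 ≤ ⟪(w : Euc d), y - x⟫}).toReal) := by
    refine ⟨0, ?_⟩
    rintro _ ⟨w, rfl⟩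
    exact ENNReal.toReal_nonneg
  have hdepth_le : tukeyDepth x p ≤ (p {y | 0 ≤ ⟪v, y - x⟫}).toReal :=
    ciInf_le hbb ⟨v, hv0⟩
  have hsub : {y : Euc d | 0 ≤ ⟪v, y - x⟫} ⊆ s n := by
    intro y hy
    simp only [Set.mem_setOf_eq] at hy
    have hx : y - x = (y - μstar) - v := by rw [hv]; abel
    rw [hx, inner_sub_right, sub_nonneg, real_inner_self_eq_norm_sq] at hy
    have hcs : ⟪v, y - μstar⟫ ≤ ‖v‖ * ‖y - μstar‖ := real_inner_le_norm v (y - μstar)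
    have hvpos : (0 : ℝ) < ‖v‖ := norm_pos_iff.mpr hv0
    have hge : ‖v‖ ≤ ‖y - μstar‖ := by
      nlinarith
    simp only [hs, Set.mem_setOf_eq]
    exact lt_of_lt_of_le hvn hge
  have hmH : MeasurableSet {y : Euc d | 0 ≤ ⟪v, y - x⟫} :=
    (inner_sub_measurable v x) measurableSet_Ici
  have hup1 : (p {y : Euc d | 0 ≤ ⟪v, y - x⟫}).toReal ≤
      (pstar {y : Euc d | 0 ≤ ⟪v, y - x⟫}).toReal + ε := by
    have := tv_term_le p pstar hmH
    linarith [this.trans htv]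
  have hup2 : (pstar {y : Euc d | 0 ≤ ⟪v, y - x⟫}).toReal ≤ (pstar (s n)).toReal := by
    exact ENNReal.toReal_le_toReal (measure_ne_top _ _) (measure_ne_top _ _) |>.mpr
      (measure_mono hsub)
  have := hmed μstar
  linarith
end
end

section
/- (Breakdown point lower bound, additive corruption) Let p* be a Borel probability measure on ℝ^d that is halfspace-symmetric with center μ*, and let 0 ≤ ε < 1/3. Then there exists a finite constant B such that for every Borel probability measure r on ℝ^d, setting p = (1 − ε)p* + εr, every Tukey median x of p satisfies ‖x − μ*‖ ≤ B. (Hence the breakdown point of the Tukey median under additive corruption is at least 1/3 for every halfspace-symmetric distribution.) -/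
open MeasureTheory
open scoped RealInnerProductSpace ENNReal Topology
open Filter

noncomputable section

/-- **Breakdown point lower bound, additive corruption.**
If `p*` is halfspace-symmetric with center `μ*` and `0 ≤ ε < 1/3`, then there is
a finite constant `B` such that for every probability measure `r`, every Tukey
median of `p = (1 − ε) p* + ε r` is within distance `B` of `μ*`. -/
theorem tukey_breakdown_additive {d : ℕ}
    (pstar : Measure (Euc d)) [IsProbabilityMeasure pstar]
    (μstar : Euc d) (hsym : IsHalfspaceSymmetric pstar μstar)
    (ε : ℝ) (hε0 : 0 ≤ ε) (hε : ε < 1 / 3) :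
    ∃ B : ℝ, ∀ r : Measure (Euc d), IsProbabilityMeasure r →
      ∀ x : Euc d,
        IsTukeyMedian x (ENNReal.ofReal (1 - ε) • pstar + ENNReal.ofReal ε • r) →
        ‖x - μstar‖ ≤ B := by
  have hε1 : (0:ℝ) ≤ 1 - ε := by linarith
  set δ : ℝ := (1 - 3 * ε) / 4 with hδdef
  have hδpos : 0 < δ := by rw [hδdef]; linarith
  -- choose B = n with pstar {‖y - μ*‖ ≥ n} < ofReal δ
  have hmeasA : ∀ n : ℕ, MeasurableSet {y : Euc d | (n:ℝ) ≤ ‖y - μstar‖} := by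
    intro n
    exact measurableSet_le measurable_const
      ((continuous_id.sub continuous_const).norm.measurable)
  have htend : Tendsto (fun n : ℕ => pstar {y : Euc d | (n:ℝ) ≤ ‖y - μstar‖}) atTop
      (𝓝 (pstar (⋂ n : ℕ, {y : Euc d | (n:ℝ) ≤ ‖y - μstar‖}))) := by
    exact tendsto_measure_iInter_atTop
      (fun n => (hmeasA n).nullMeasurableSet)
      (fun m n hmn y hy => le_trans (Nat.cast_le.mpr hmn : (m:ℝ) ≤ (n:ℝ)) hy)
      ⟨0, measure_ne_top _ _⟩
  have hempty : (⋂ n : ℕ, {y : Euc d | (n:ℝ) ≤ ‖y - μstar‖}) = ∅ := by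
    ext y
    simp only [Set.mem_iInter, Set.mem_setOf_eq, Set.mem_empty_iff_false, iff_false, not_forall]
    obtain ⟨n, hn⟩ := exists_nat_gt ‖y - μstar‖
    exact ⟨n, not_le.mpr hn⟩
  rw [hempty, measure_empty] at htend
  have hev : ∀ᶠ n : ℕ in atTop, pstar {y : Euc d | (n:ℝ) ≤ ‖y - μstar‖} < ENNReal.ofReal δ := by
    exact htend.eventually_lt_const (by simpa using hδpos)
  obtain ⟨n, hn1, hn⟩ := ((eventually_ge_atTop 1).and hev).exists
  refine ⟨(n : ℝ), ?_⟩
  intro r hr x hx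
  by_contra hB
  push_neg at hB
  set v : Euc d := x - μstar with hvdef
  have hnorm : (n : ℝ) < ‖v‖ := hB
  have hn1' : (1:ℝ) ≤ (n:ℝ) := by exact_mod_cast hn1
  have hvpos : 0 < ‖v‖ := by linarith
  have hv : v ≠ 0 := norm_pos_iff.mp hvpos
  haveI : Nonempty {w : Euc d // w ≠ 0} := ⟨⟨v, hv⟩⟩
  set p : Measure (Euc d) := ENNReal.ofReal (1 - ε) • pstar + ENNReal.ofReal ε • r with hp
  have happ : ∀ S : Set (Euc d),
      p S = ENNReal.ofReal (1 - ε) * pstar S + ENNReal.ofReal ε * r S := by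
    intro S
    simp [hp, Measure.add_apply, Measure.smul_apply, smul_eq_mul]
  haveI hppro : IsProbabilityMeasure p := by
    constructor
    rw [happ, measure_univ, measure_univ, mul_one, mul_one,
      ← ENNReal.ofReal_add hε1 hε0]
    norm_num
  have hfin : ∀ S : Set (Euc d), p S ≠ ∞ := fun S => measure_ne_top p S
  -- measurability of halfspaces
  have hcont : ∀ w c : Euc d, Continuous fun y : Euc d => ⟪w, y - c⟫ := by
    intro w c
    exact Continuous.inner continuous_const (continuous_id.sub continuous_const)
  -- half mass lower bound from symmetry
  have hhalf : ∀ w : Euc d, ENNReal.ofReal (1/2) ≤ pstar {y | 0 ≤ ⟪w, y - μstar⟫} := by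
    intro w
    set f : Euc d → ℝ := fun y => ⟪w, y - μstar⟫ with hfdef
    have hf : Measurable f := (hcont w μstar).measurable
    have h1 : pstar {y | 0 ≤ f y} = (pstar.map f) (Set.Ici 0) := by
      rw [Measure.map_apply hf measurableSet_Ici]; rfl
    have h2 : (pstar.map (fun y => -f y)) (Set.Ici 0) = pstar {y | f y ≤ 0} := by
      rw [Measure.map_apply (f := fun y => -f y) hf.neg measurableSet_Ici]
      congr 1
      ext y
      simp [neg_nonneg]
    have heq : pstar {y | f y ≤ 0} = pstar {y | 0 ≤ f y} := by
      rw [← h2, h1, hsym w]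
    have hsum : (1 : ℝ≥0∞) ≤ pstar {y | 0 ≤ f y} + pstar {y | 0 ≤ f y} := by
      calc (1 : ℝ≥0∞) = pstar Set.univ := (measure_univ).symm
        _ ≤ pstar ({y | 0 ≤ f y} ∪ {y | f y ≤ 0}) := by
            apply measure_mono
            intro y _
            exact (le_total 0 (f y)).imp id id
        _ ≤ pstar {y | 0 ≤ f y} + pstar {y | f y ≤ 0} := measure_union_le _ _
        _ = _ := by rw [heq]
    by_contra hc
    push_neg at hc
    have := ENNReal.add_lt_add hc hc
    rw [← ENNReal.ofReal_add (by norm_num) (by norm_num)] at this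
    norm_num at this
    exact absurd (lt_of_le_of_lt hsum this) (by simp)
  -- depth of μstar is at least (1-ε)/2
  have hdepth1 : (1 - ε)/2 ≤ tukeyDepth μstar p := by
    apply le_ciInf
    rintro ⟨w, hw⟩
    have h1 : ENNReal.ofReal ((1 - ε)/2) ≤ p {y | 0 ≤ ⟪w, y - μstar⟫} := by
      calc ENNReal.ofReal ((1 - ε)/2)
          = ENNReal.ofReal (1 - ε) * ENNReal.ofReal (1/2) := by
            rw [← ENNReal.ofReal_mul hε1]; congr 1; ring
        _ ≤ ENNReal.ofReal (1 - ε) * pstar {y | 0 ≤ ⟪w, y - μstar⟫} :=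
            mul_le_mul_right (hhalf w) _
        _ ≤ p {y | 0 ≤ ⟪w, y - μstar⟫} := by rw [happ]; exact le_self_add
    exact (ENNReal.ofReal_le_iff_le_toReal (hfin _)).mp h1
  -- depth of x is small
  have hbdd : BddBelow (Set.range fun w : {w : Euc d // w ≠ 0} =>
      (p {y | 0 ≤ ⟪(w : Euc d), y - x⟫}).toReal) := by
    refine ⟨0, ?_⟩
    rintro _ ⟨w, rfl⟩
    exact ENNReal.toReal_nonneg
  have hdepth2 : tukeyDepth x p ≤ (p {y | 0 ≤ ⟪v, y - x⟫}).toReal :=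
    ciInf_le hbdd ⟨v, hv⟩
  have hsub : {y : Euc d | 0 ≤ ⟪v, y - x⟫} ⊆ {y : Euc d | (n:ℝ) ≤ ‖y - μstar‖} := by
    intro y hy
    simp only [Set.mem_setOf_eq] at hy ⊢
    have hsplit : ⟪v, y - x⟫ = ⟪v, y - μstar⟫ - ⟪v, v⟫ := by
      rw [← inner_sub_right]
      congr 1
      rw [hvdef]
      abel
    have hself : ⟪v, v⟫ = ‖v‖ ^ 2 := real_inner_self_eq_norm_sq v
    have h1 : ‖v‖ ^ 2 ≤ ⟪v, y - μstar⟫ := by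
      rw [hsplit, hself] at hy; linarith
    have h2 : ⟪v, y - μstar⟫ ≤ ‖v‖ * ‖y - μstar‖ := real_inner_le_norm v _
    nlinarith
  have hup : p {y | 0 ≤ ⟪v, y - x⟫} < ENNReal.ofReal ((1 - ε)/2) := by
    calc p {y | 0 ≤ ⟪v, y - x⟫}
        ≤ ENNReal.ofReal (1 - ε) * ENNReal.ofReal δ + ENNReal.ofReal ε * 1 := by
          rw [happ]
          gcongr
          · exact le_of_lt (lt_of_le_of_lt (measure_mono hsub) hn)
          · exact prob_le_one
      _ = ENNReal.ofReal ((1 - ε) * δ + ε) := by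
          rw [mul_one, ← ENNReal.ofReal_mul hε1, ← ENNReal.ofReal_add (by positivity) hε0]
      _ < ENNReal.ofReal ((1 - ε)/2) := by
          apply ENNReal.ofReal_lt_ofReal_iff_of_nonneg (by positivity) |>.mpr
          rw [hδdef]
          nlinarith
  have hlt : (p {y | 0 ≤ ⟪v, y - x⟫}).toReal < (1 - ε)/2 :=
    ENNReal.toReal_lt_of_lt_ofReal hup
  have hmed := hx μstar
  linarith


end
end

section
/- (Tetrahedron construction for the 1/4 breakdown upper bound) Let a₁, a₂, a₃, a₄ ∈ ℝ³ be affinely independent points, and let p = (1/4)(δ_{a₁} + δ_{a₂} + δ_{a₃} + δ_{a₄}) be the uniform distribution on these four points. Then every point x in the convex hull of {a₁, a₂, a₃, a₄} has Tukey depth D(x, p) = 1/4, and every point x outside this convex hull has Tukey depth D(x, p) = 0. In particular, every point of the tetrahedron is a Tukey median of p. -/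
open MeasureTheory
open scoped RealInnerProductSpace ENNReal

noncomputable section

lemma hull_weights (a : Fin 4 → Euc 3) {x : Euc 3} (hx : x ∈ convexHull ℝ (Set.range a)) :
    ∃ W : Fin 4 → ℝ, (∀ i, 0 ≤ W i) ∧ ∑ i, W i = 1 ∧ ∑ i, W i • a i = x := by
  rw [convexHull_range_eq_exists_affineCombination] at hx
  obtain ⟨s, w, hw0, hw1, hwx⟩ := hx
  refine ⟨fun i => if i ∈ s then w i else 0,
    fun i => by dsimp only; split_ifs with h; exacts [hw0 i h, le_refl 0], ?_, ?_⟩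
  · rw [Finset.sum_ite_mem, Finset.univ_inter, hw1]
  · rw [← hwx, Finset.affineCombination_eq_linear_combination s a w hw1]
    simp only [ite_smul, zero_smul]
    rw [Finset.sum_ite_mem, Finset.univ_inter]

lemma exists_normal (a : Fin 4 → Euc 3) (ha : AffineIndependent ℝ a) (i : Fin 4) :
    ∃ n : Euc 3, ∀ j, j ≠ i → ⟪n, a j - a i⟫ = -1 := by
  obtain ⟨j0, hj0⟩ := exists_ne i
  haveI : Nonempty {j : Fin 4 // j ≠ i} := ⟨⟨j0, hj0⟩⟩
  have li : LinearIndependent ℝ (fun j : {j : Fin 4 // j ≠ i} => a j - a i) := by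
    have := (affineIndependent_iff_linearIndependent_vsub ℝ a i).mp ha
    simpa [vsub_eq_sub] using this
  have hcard : Fintype.card {j : Fin 4 // j ≠ i} = Module.finrank ℝ (Euc 3) := by
    simp [Fintype.card_subtype_compl, Fintype.card_subtype_eq, finrank_euclideanSpace_fin]
  let B := basisOfLinearIndependentOfCardEqFinrank li hcard
  have hB : ∀ j, B j = a j.1 - a i :=
    fun j => congrFun (coe_basisOfLinearIndependentOfCardEqFinrank li hcard) j
  let f := B.constr ℝ (fun _ => (-1 : ℝ))
  refine ⟨(InnerProductSpace.toDual ℝ (Euc 3)).symm (LinearMap.toContinuousLinearMap f),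
    fun j hj => ?_⟩
  rw [InnerProductSpace.toDual_symm_apply]
  show f (a j - a i) = -1
  have h1 : a j - a i = B ⟨j, hj⟩ := (hB ⟨j, hj⟩).symm
  rw [h1]
  exact B.constr_basis ℝ _ _

lemma measHS (a : Fin 4 → Euc 3) (v x : Euc 3) :
    (((4⁻¹ : ℝ≥0∞) • (Measure.dirac (a 0) + Measure.dirac (a 1) +
        Measure.dirac (a 2) + Measure.dirac (a 3))) {y : Euc 3 | 0 ≤ ⟪v, y - x⟫}).toReal
    = 4⁻¹ * ∑ j : Fin 4, (if 0 ≤ ⟪v, a j - x⟫ then (1 : ℝ) else 0) := by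
  have hc : Continuous fun y : Euc 3 => ⟪v, y - x⟫ :=
    continuous_const.inner (continuous_id.sub continuous_const)
  have hs : MeasurableSet {y : Euc 3 | 0 ≤ ⟪v, y - x⟫} :=
    measurableSet_le measurable_const hc.measurable
  rw [Fin.sum_univ_four, Measure.smul_apply, Measure.add_apply, Measure.add_apply,
    Measure.add_apply, Measure.dirac_apply' _ hs, Measure.dirac_apply' _ hs,
    Measure.dirac_apply' _ hs, Measure.dirac_apply' _ hs]
  simp only [Set.indicator_apply, Set.mem_setOf_eq, Pi.one_apply, smul_eq_mul]
  split_ifs <;> norm_num [ENNReal.toReal_mul, ENNReal.toReal_inv]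

/-- **Tetrahedron construction for the 1/4 breakdown upper bound.**
For affinely independent `a₁, a₂, a₃, a₄ ∈ ℝ³` and
`p = (1/4)(δ_{a₁} + δ_{a₂} + δ_{a₃} + δ_{a₄})`, every point of the convex hull
of the four points has Tukey depth `1/4` (and is a Tukey median of `p`), while
every point outside the convex hull has Tukey depth `0`. -/
theorem tetrahedron_tukey_depth
    (a : Fin 4 → Euc 3) (ha : AffineIndependent ℝ a)
    (p : Measure (Euc 3))
    (hp : p = (4⁻¹ : ℝ≥0∞) •
      (Measure.dirac (a 0) + Measure.dirac (a 1) +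
        Measure.dirac (a 2) + Measure.dirac (a 3))) :
    (∀ x ∈ convexHull ℝ (Set.range a),
      tukeyDepth x p = 1 / 4 ∧ IsTukeyMedian x p) ∧
    (∀ x ∉ convexHull ℝ (Set.range a), tukeyDepth x p = 0) := by
  haveI : Nonempty {v : Euc 3 // v ≠ 0} := by
    refine ⟨⟨EuclideanSpace.single 0 1, fun h => ?_⟩⟩
    have := congrArg (fun w : Euc 3 => w 0) h
    simp [EuclideanSpace.single_apply] at this
  have hbdd : ∀ x : Euc 3, BddBelow (Set.range fun v : {v : Euc 3 // v ≠ 0} =>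
      (p {y | 0 ≤ ⟪(v : Euc 3), y - x⟫}).toReal) := by
    intro x
    refine ⟨0, ?_⟩
    rintro r ⟨v, rfl⟩
    exact ENNReal.toReal_nonneg
  have hval : ∀ (v x : Euc 3),
      (p {y : Euc 3 | 0 ≤ ⟪v, y - x⟫}).toReal
      = 4⁻¹ * ∑ j : Fin 4, (if 0 ≤ ⟪v, a j - x⟫ then (1 : ℝ) else 0) := by
    intro v x; rw [hp]; exact measHS a v x
  -- depth inside the hull
  have hin : ∀ x ∈ convexHull ℝ (Set.range a), tukeyDepth x p = 1 / 4 := by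
    intro x hx
    obtain ⟨W, hW0, hW1, hWx⟩ := hull_weights a hx
    obtain ⟨i, hWi⟩ : ∃ i, 0 < W i := by
      by_contra h
      push_neg at h
      have : ∑ i, W i ≤ 0 := Finset.sum_nonpos fun i _ => h i
      linarith
    -- the zero-sum identity
    have hsum0 : ∀ v : Euc 3, ∑ j, W j * ⟪v, a j - x⟫ = 0 := by
      intro v
      have h1 : ∑ j, W j • (a j - x) = (0 : Euc 3) := by
        simp only [smul_sub]
        rw [Finset.sum_sub_distrib, hWx, ← Finset.sum_smul, hW1, one_smul, sub_self]
      calc ∑ j, W j * ⟪v, a j - x⟫ = ⟪v, ∑ j, W j • (a j - x)⟫ := by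
            rw [inner_sum]
            exact Finset.sum_congr rfl fun j _ => (real_inner_smul_right _ _ _).symm
        _ = 0 := by rw [h1, inner_zero_right]
    -- lower bound
    have hlow : (1 / 4 : ℝ) ≤ tukeyDepth x p := by
      apply le_ciInf
      rintro ⟨v, hv⟩
      have hex : ∃ j, 0 ≤ ⟪v, a j - x⟫ := by
        by_contra hcon
        push_neg at hcon
        have hlt : ∑ j, W j * ⟪v, a j - x⟫ < ∑ _j : Fin 4, (0 : ℝ) :=
          Finset.sum_lt_sum
            (fun j _ => mul_nonpos_of_nonneg_of_nonpos (hW0 j) (le_of_lt (hcon j)))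
            ⟨i, Finset.mem_univ i, mul_neg_of_pos_of_neg hWi (hcon i)⟩
        rw [hsum0 v, Finset.sum_const, smul_zero] at hlt
        exact lt_irrefl _ hlt
      obtain ⟨j, hj⟩ := hex
      rw [hval v x]
      have h1 : (1 : ℝ) ≤ ∑ k : Fin 4, (if 0 ≤ ⟪v, a k - x⟫ then (1 : ℝ) else 0) := by
        have := Finset.single_le_sum
          (f := fun k : Fin 4 => (if 0 ≤ ⟪v, a k - x⟫ then (1 : ℝ) else 0))
          (fun k _ => by split_ifs <;> norm_num) (Finset.mem_univ j)
        rwa [if_pos hj] at this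
      linarith
    -- upper bound
    have hWile : W i ≤ 1 := by
      have := Finset.single_le_sum (f := W) (fun k _ => hW0 k) (Finset.mem_univ i)
      linarith
    obtain ⟨n, hn⟩ := exists_normal a ha i
    have hn0 : n ≠ 0 := by
      obtain ⟨j, hj⟩ := exists_ne i
      intro h
      have := hn j hj
      rw [h, inner_zero_left] at this
      norm_num at this
    have hxai : x - a i = ∑ j, W j • (a j - a i) := by
      simp only [smul_sub]
      rw [Finset.sum_sub_distrib, hWx, ← Finset.sum_smul, hW1, one_smul]
    have hkey : ⟪n, x - a i⟫ = W i - 1 := by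
      rw [hxai, inner_sum]
      have : ∀ j : Fin 4, ⟪n, W j • (a j - a i)⟫ = -W j + (if j = i then W j else 0) := by
        intro j
        rw [real_inner_smul_right]
        by_cases hj : j = i
        · subst hj; simp
        · rw [hn j hj, if_neg hj]; ring
      rw [Finset.sum_congr rfl fun j _ => this j, Finset.sum_add_distrib,
        Finset.sum_neg_distrib, hW1, Finset.sum_ite_eq' Finset.univ i W,
        if_pos (Finset.mem_univ i)]
      ring
    have hiax : ⟪n, a i - x⟫ = 1 - W i := by
      rw [← neg_sub x (a i), inner_neg_right, hkey]; ring
    have hpos : 0 ≤ ⟪n, a i - x⟫ := by rw [hiax]; linarith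
    have hneg : ∀ j, j ≠ i → ⟪n, a j - x⟫ < 0 := by
      intro j hj
      have h2 : a j - x = (a j - a i) + (a i - x) := by abel
      rw [h2, inner_add_right, hn j hj, hiax]
      linarith
    have hub : tukeyDepth x p ≤ 1 / 4 := by
      have hle := ciInf_le (hbdd x) (⟨n, hn0⟩ : {v : Euc 3 // v ≠ 0})
      refine le_trans hle ?_
      rw [hval n x]
      have hsum : ∑ j : Fin 4, (if 0 ≤ ⟪n, a j - x⟫ then (1 : ℝ) else 0)
          = ∑ j : Fin 4, (if j = i then (1 : ℝ) else 0) := by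
        refine Finset.sum_congr rfl fun j _ => ?_
        by_cases hj : j = i
        · subst hj; rw [if_pos hpos, if_pos rfl]
        · rw [if_neg (not_le.mpr (hneg j hj)), if_neg hj]
      rw [hsum, Finset.sum_ite_eq' Finset.univ i (fun _ => (1 : ℝ)),
        if_pos (Finset.mem_univ i)]
      norm_num
    linarith
  have hout : ∀ x ∉ convexHull ℝ (Set.range a), tukeyDepth x p = 0 := by
    intro x hx
    obtain ⟨f, u, hfs, hfx⟩ := geometric_hahn_banach_closed_point
      (convex_convexHull ℝ (Set.range a)) ((Set.finite_range a).isClosed_convexHull (𝕜 := ℝ)) hx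
    set v : Euc 3 := (InnerProductSpace.toDual ℝ (Euc 3)).symm f with hv
    have hvy : ∀ y : Euc 3, ⟪v, y⟫ = f y := fun y => InnerProductSpace.toDual_symm_apply
    have hva : ∀ j : Fin 4, ⟪v, a j - x⟫ < 0 := by
      intro j
      have h1 : f (a j) < u := hfs (a j) (subset_convexHull ℝ _ ⟨j, rfl⟩)
      have : ⟪v, a j - x⟫ = f (a j) - f x := by
        rw [inner_sub_right, hvy, hvy]
      rw [this]; linarith
    have hv0 : v ≠ 0 := by
      intro h
      have h0 := hva 0
      rw [h, inner_zero_left] at h0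
      exact lt_irrefl _ h0
    refine le_antisymm ?_ ?_
    · have hle := ciInf_le (hbdd x) (⟨v, hv0⟩ : {v : Euc 3 // v ≠ 0})
      refine le_trans hle ?_
      rw [hval v x]
      have : ∑ j : Fin 4, (if 0 ≤ ⟪v, a j - x⟫ then (1 : ℝ) else 0) = 0 := by
        refine Finset.sum_eq_zero fun j _ => if_neg (not_le.mpr (hva j))
      rw [this]; norm_num
    · exact le_ciInf fun v => ENNReal.toReal_nonneg
  refine ⟨fun x hx => ⟨hin x hx, fun y => ?_⟩, hout⟩
  rw [hin x hx]
  by_cases hy : y ∈ convexHull ℝ (Set.range a)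
  · rw [hin y hy]
  · rw [hout y hy]; norm_num


end
end

section
/- (Ball-plus-point construction for the 1/3 breakdown upper bound) Let d ≥ 2, let U be the uniform probability measure on the closed unit ball of ℝ^d, let μ ∈ ℝ^d with ‖μ‖ > 1, and let p = (2/3)U + (1/3)δ_μ. Then D(μ, p) = 1/3 and D(x, p) ≤ 1/3 for every x ∈ ℝ^d; i.e., μ is a Tukey median of p. (Letting ‖μ‖ → ∞ shows that adding 1/3 of the mass at a far point drives the Tukey median to infinity.) -/
open MeasureTheory
open scoped RealInnerProductSpace ENNReal

noncomputable section

namespace BallPlusPointAux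

variable {d : ℕ}

lemma measHS (v x : Euc d) : MeasurableSet {y : Euc d | 0 ≤ ⟪v, y - x⟫} :=
  measurableSet_le measurable_const
    (continuous_const.inner (continuous_id.sub continuous_const)).measurable

lemma measHS0 (v : Euc d) (c : ℝ) : MeasurableSet {y : Euc d | c ≤ ⟪v, y⟫} :=
  measurableSet_le measurable_const (continuous_const.inner continuous_id).measurable

lemma vol_half (v : Euc d) (hv : v ≠ 0) :
    volume ({y : Euc d | 0 ≤ ⟪v, y⟫} ∩ Metric.closedBall 0 1)
      = volume (Metric.closedBall (0 : Euc d) 1) / 2 := by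
  set B : Set (Euc d) := Metric.closedBall 0 1 with hB
  set S : Set (Euc d) := {y | 0 ≤ ⟪v, y⟫} ∩ B with hS
  set S' : Set (Euc d) := {y | ⟪v, y⟫ ≤ 0} ∩ B with hS'
  have hS'm : MeasurableSet S' := by
    have : MeasurableSet {y : Euc d | ⟪v, y⟫ ≤ 0} :=
      measurableSet_le (continuous_const.inner continuous_id).measurable measurable_const
    exact this.inter measurableSet_closedBall
  have hneg : -S = S' := by
    ext y
    simp only [Set.mem_neg, hS, hS', Set.mem_inter_iff, Set.mem_setOf_eq, hB,
      Metric.mem_closedBall, dist_zero_right, inner_neg_right, norm_neg]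
    constructor
    · rintro ⟨h1, h2⟩; exact ⟨by linarith, h2⟩
    · rintro ⟨h1, h2⟩; exact ⟨by linarith, h2⟩
  have hvolneg : volume S' = volume S := by rw [← hneg, Measure.measure_neg]
  have hunion : S ∪ S' = B := by
    ext y
    constructor
    · rintro (⟨_, h⟩ | ⟨_, h⟩) <;> exact h
    · intro h
      rcases le_total 0 ⟪v, y⟫ with h' | h'
      · exact Or.inl ⟨h', h⟩
      · exact Or.inr ⟨h', h⟩
  have hinter : volume (S ∩ S') = 0 := by
    have hker : S ∩ S' ⊆ (LinearMap.ker (innerSL ℝ v : Euc d →ₗ[ℝ] ℝ) : Set (Euc d)) := by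
      rintro y ⟨⟨h1, _⟩, ⟨h2, _⟩⟩
      have : ⟪v, y⟫ = 0 := le_antisymm h2 h1
      simpa [LinearMap.mem_ker] using this
    refine measure_mono_null hker (Measure.addHaar_submodule _ _ ?_)
    intro htop
    have hv2 : v ∈ LinearMap.ker (innerSL ℝ v : Euc d →ₗ[ℝ] ℝ) := htop ▸ Submodule.mem_top
    rw [LinearMap.mem_ker] at hv2
    simp only [ContinuousLinearMap.coe_coe, innerSL_apply_apply] at hv2
    exact hv (inner_self_eq_zero.1 hv2)
  have hsum : volume S + volume S = volume B := by
    have h := measure_union_add_inter (μ := volume) S hS'm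
    rw [hunion, hinter, add_zero, hvolneg] at h
    exact h.symm
  rw [ENNReal.eq_div_iff two_ne_zero ENNReal.ofNat_ne_top, two_mul]
  exact hsum

lemma exists_orth (hd : 2 ≤ d) (u : Euc d) (hu : u ≠ 0) :
    ∃ w : Euc d, w ≠ 0 ∧ ⟪u, w⟫ = 0 := by
  have h1 : Module.finrank ℝ (Euc d) = d := by simp
  have h2 : Module.finrank ℝ (ℝ ∙ u) = 1 := finrank_span_singleton hu
  have h4 : (ℝ ∙ u)ᗮ ≠ ⊥ := by
    intro hbot
    have := Submodule.finrank_add_finrank_orthogonal (K := (ℝ ∙ u)) (𝕜 := ℝ)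
    rw [hbot] at this
    simp [h2, h1, finrank_bot] at this
    omega
  obtain ⟨w, hw, hw0⟩ := Submodule.exists_mem_ne_zero_of_ne_bot h4
  exact ⟨w, hw0, (Submodule.mem_orthogonal _ _).1 hw u (Submodule.mem_span_singleton_self u)⟩

end BallPlusPointAux

open BallPlusPointAux Filter

set_option maxHeartbeats 1000000 in
/-- **Ball-plus-point construction for the 1/3 breakdown upper
bound.** Let `d ≥ 2`, let `U` be the uniform probability measure on the closed
unit ball of `ℝ^d`, let `‖μ‖ > 1`, and let `p = (2/3) U + (1/3) δ_μ`. Then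
`D(μ, p) = 1/3` and `D(x, p) ≤ 1/3` for every `x`; i.e. `μ` is a Tukey median. -/
theorem ball_plus_point_tukey_depth {d : ℕ} (hd : 2 ≤ d)
    (μ : Euc d) (hμ : 1 < ‖μ‖)
    (U p : Measure (Euc d))
    (hU : U = (volume (Metric.closedBall (0 : Euc d) 1))⁻¹ •
      volume.restrict (Metric.closedBall (0 : Euc d) 1))
    (hp : p = (2 / 3 : ℝ≥0∞) • U + (3⁻¹ : ℝ≥0∞) • Measure.dirac μ) :
    tukeyDepth μ p = 1 / 3 ∧ ∀ x : Euc d, tukeyDepth x p ≤ 1 / 3 := by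
  have hμ0 : μ ≠ 0 := by
    intro h; rw [h, norm_zero] at hμ; linarith
  set B : Set (Euc d) := Metric.closedBall 0 1 with hB
  have hB0 : volume B ≠ 0 := (Metric.measure_closedBall_pos _ _ one_pos).ne'
  have hBtop : volume B ≠ ⊤ := measure_closedBall_lt_top.ne
  -- value of p on measurable sets
  have hpA_mem : ∀ A : Set (Euc d), MeasurableSet A → μ ∈ A →
      p A = 2/3 * ((volume B)⁻¹ * volume (A ∩ B)) + 3⁻¹ := by
    intro A hA hmem
    rw [hp, hU]
    rw [Measure.add_apply, Measure.smul_apply, Measure.smul_apply, Measure.smul_apply,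
      Measure.restrict_apply hA, Measure.dirac_apply' _ hA, Set.indicator_of_mem hmem]
    simp [smul_eq_mul, mul_assoc]
  have hpA_not : ∀ A : Set (Euc d), MeasurableSet A → μ ∉ A →
      p A = 2/3 * ((volume B)⁻¹ * volume (A ∩ B)) := by
    intro A hA hmem
    rw [hp, hU]
    rw [Measure.add_apply, Measure.smul_apply, Measure.smul_apply, Measure.smul_apply,
      Measure.restrict_apply hA, Measure.dirac_apply' _ hA, Set.indicator_of_notMem hmem]
    simp [smul_eq_mul, mul_assoc]
  have hq_le_one : ∀ A : Set (Euc d), (volume B)⁻¹ * volume (A ∩ B) ≤ 1 := by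
    intro A
    calc (volume B)⁻¹ * volume (A ∩ B) ≤ (volume B)⁻¹ * volume B :=
          mul_le_mul_right (measure_mono Set.inter_subset_right) _
      _ = 1 := ENNReal.inv_mul_cancel hB0 hBtop
  have hterm_fin : ∀ A : Set (Euc d),
      2/3 * ((volume B)⁻¹ * volume (A ∩ B)) ≠ ⊤ := by
    intro A
    refine ne_top_of_le_ne_top (b := 2/3 * 1) ?_ (mul_le_mul_right (hq_le_one A) _)
    rw [mul_one]
    exact (ENNReal.div_lt_top (by simp) (by simp)).ne
  have hfin : ∀ A : Set (Euc d), MeasurableSet A → p A ≠ ⊤ := by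
    intro A hA
    by_cases hmem : μ ∈ A
    · rw [hpA_mem A hA hmem]
      exact ENNReal.add_ne_top.2 ⟨hterm_fin A, by simp⟩
    · rw [hpA_not A hA hmem]
      exact hterm_fin A
  have hbdd : ∀ y : Euc d, BddBelow (Set.range fun v : {v : Euc d // v ≠ 0} =>
      (p {x | 0 ≤ ⟪(v : Euc d), x - y⟫}).toReal) := by
    intro y
    exact ⟨0, by rintro r ⟨v, rfl⟩; exact ENNReal.toReal_nonneg⟩
  have depth_le : ∀ y v : Euc d, v ≠ 0 →
      tukeyDepth y p ≤ (p {x | 0 ≤ ⟪v, x - y⟫}).toReal := by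
    intro y v hv
    exact ciInf_le (hbdd y) ⟨v, hv⟩
  -- key ENNReal arithmetic
  have hhalfval : (volume B)⁻¹ * (volume B / 2) = 2⁻¹ := by
    rw [div_eq_mul_inv, ← mul_assoc, ENNReal.inv_mul_cancel hB0 hBtop, one_mul]
  have h23 : (2/3 : ℝ≥0∞) * 2⁻¹ = 3⁻¹ := by
    rw [div_eq_mul_inv, mul_right_comm, ENNReal.mul_inv_cancel two_ne_zero ENNReal.ofNat_ne_top,
      one_mul]
  haveI : Nonempty {v : Euc d // v ≠ 0} := ⟨⟨μ, hμ0⟩⟩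
  -- Part 1
  have hdepthμ : tukeyDepth μ p = 1/3 := by
    refine le_antisymm ?_ (le_ciInf ?_)
    · have hsub : {x : Euc d | 0 ≤ ⟪μ, x - μ⟫} ∩ B = ∅ := by
        ext y
        simp only [Set.mem_inter_iff, Set.mem_setOf_eq, hB, Metric.mem_closedBall,
          dist_zero_right, Set.mem_empty_iff_false, iff_false, not_and]
        intro h1 h2
        rw [inner_sub_right, sub_nonneg, real_inner_self_eq_norm_sq] at h1
        have h3 : ⟪μ, y⟫ ≤ ‖μ‖ * ‖y‖ := real_inner_le_norm μ y
        nlinarith [norm_nonneg (y : Euc d), norm_nonneg μ]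
      have hmem : μ ∈ {x : Euc d | 0 ≤ ⟪μ, x - μ⟫} := by simp
      have hval : p {x : Euc d | 0 ≤ ⟪μ, x - μ⟫} = 3⁻¹ := by
        rw [hpA_mem _ (measHS μ μ) hmem, hsub]
        simp
      have h := depth_le μ μ hμ0
      rw [hval] at h
      simpa using h
    · rintro ⟨v, hv⟩
      have hA := measHS v μ
      have hmem : μ ∈ {x : Euc d | 0 ≤ ⟪v, x - μ⟫} := by simp
      have h1 : (3⁻¹ : ℝ≥0∞) ≤ p {x : Euc d | 0 ≤ ⟪v, x - μ⟫} := by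
        rw [hpA_mem _ hA hmem]
        exact le_add_self
      have h2 := ENNReal.toReal_mono (hfin _ hA) h1
      simpa using h2
  refine ⟨hdepthμ, fun x => ?_⟩
  by_cases hx : x = μ
  · rw [hx, hdepthμ]
  -- a good direction gives depth ≤ 1/3
  have good : ∀ v : Euc d, 0 < ⟪v, x - μ⟫ → 0 ≤ ⟪v, x⟫ → tukeyDepth x p ≤ 1/3 := by
    intro v hv1 hv2
    have hv : v ≠ 0 := by rintro rfl; simp at hv1
    have hA := measHS v x
    have hnotmem : μ ∉ {y : Euc d | 0 ≤ ⟪v, y - x⟫} := by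
      simp only [Set.mem_setOf_eq, not_le]
      have h : ⟪v, μ - x⟫ = -⟪v, x - μ⟫ := by rw [← inner_neg_right, neg_sub]
      rw [h]; linarith
    have hsub : {y : Euc d | 0 ≤ ⟪v, y - x⟫} ∩ B ⊆ {y : Euc d | 0 ≤ ⟪v, y⟫} ∩ B := by
      rintro y ⟨h1, h2⟩
      refine ⟨?_, h2⟩
      simp only [Set.mem_setOf_eq] at h1 ⊢
      rw [inner_sub_right] at h1
      linarith
    have hple : p {y : Euc d | 0 ≤ ⟪v, y - x⟫} ≤ 3⁻¹ := by
      rw [hpA_not _ hA hnotmem]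
      calc 2/3 * ((volume B)⁻¹ * volume ({y : Euc d | 0 ≤ ⟪v, y - x⟫} ∩ B))
          ≤ 2/3 * ((volume B)⁻¹ * (volume B / 2)) := by
            refine mul_le_mul_right (mul_le_mul_right ?_ _) _
            rw [← vol_half v hv]
            exact measure_mono hsub
        _ = 3⁻¹ := by rw [hhalfval, h23]
    have h := depth_le x v hv
    refine h.trans ?_
    have h2 := ENNReal.toReal_mono (by simp : (3⁻¹ : ℝ≥0∞) ≠ ⊤) hple
    simpa using h2
  set u : Euc d := x - μ with hu_def
  have hu : u ≠ 0 := sub_ne_zero.2 hx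
  have hun : (0:ℝ) < ‖u‖^2 := pow_pos (norm_pos_iff.mpr hu) 2
  by_cases h0 : 0 ≤ ⟪u, x⟫
  · refine good u ?_ h0
    rw [real_inner_self_eq_norm_sq]
    exact hun
  push_neg at h0
  set c : ℝ := ⟪u, x⟫ / ‖u‖^2 with hc_def
  have hc : c < 0 := div_neg_of_neg_of_pos h0 hun
  have hcu : ⟪u, x - c • u⟫ = 0 := by
    rw [inner_sub_right, real_inner_smul_right, real_inner_self_eq_norm_sq, hc_def,
      div_mul_cancel₀ _ hun.ne']
    ring
  by_cases hw : x - c • u = 0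
  · -- hard case : x = c • u with c < 0
    have hx_eq : x = c • u := by rwa [sub_eq_zero] at hw
    obtain ⟨w0, hw0, hw0u⟩ := exists_orth hd u hu
    set K : ℝ := ‖u‖ - c * ‖u‖^2 with hK_def
    have hKpos : (0:ℝ) < K := by nlinarith [norm_pos_iff.2 hu]
    -- the perturbed directions
    set t : ℕ → ℝ := fun n => 1/(n+1) with ht_def
    have htpos : ∀ n, (0:ℝ) < t n := by
      intro n
      show (0:ℝ) < 1/(n+1)
      positivity
    set v : ℕ → Euc d := fun n => w0 + t n • u with hv_def
    have hvu : ∀ n, ⟪v n, u⟫ = t n * ‖u‖^2 := by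
      intro n
      rw [hv_def]
      simp only
      rw [inner_add_left, real_inner_smul_left, real_inner_self_eq_norm_sq,
        real_inner_comm, hw0u, zero_add]
    have hvx : ∀ n, ⟪v n, x⟫ = c * (t n * ‖u‖^2) := by
      intro n
      rw [hx_eq, real_inner_smul_right, hvu n]
    have hvne : ∀ n, v n ≠ 0 := by
      intro n h
      have h2 := hvu n
      rw [h, inner_zero_left] at h2
      have h3 : 0 < t n * ‖u‖^2 := mul_pos (htpos n) hun
      linarith
    -- the enlarged half-spaces
    set A : ℕ → Set (Euc d) := fun n => {y : Euc d | -(t n * K) ≤ ⟪w0, y⟫} with hA_def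
    have hAm : ∀ n, MeasurableSet (A n ∩ B) :=
      fun n => (measHS0 w0 _).inter measurableSet_closedBall
    have hsubA : ∀ n, {y : Euc d | 0 ≤ ⟪v n, y - x⟫} ∩ B ⊆ A n ∩ B := by
      intro n
      rintro y ⟨h1, h2⟩
      refine ⟨?_, h2⟩
      simp only [Set.mem_setOf_eq] at h1 ⊢
      rw [inner_sub_right] at h1
      have hy1 : ‖y‖ ≤ 1 := by
        rw [hB] at h2
        simpa [dist_zero_right] using h2
      have hvyn : ⟪v n, y⟫ = ⟪w0, y⟫ + t n * ⟪u, y⟫ := by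
        rw [hv_def]
        simp only
        rw [inner_add_left, real_inner_smul_left]
      have huy : ⟪u, y⟫ ≤ ‖u‖ := by
        calc ⟪u, y⟫ ≤ ‖u‖ * ‖y‖ := real_inner_le_norm u y
          _ ≤ ‖u‖ * 1 := by gcongr
          _ = ‖u‖ := mul_one _
      rw [hvyn, hvx n] at h1
      have htn := htpos n
      have hmul : t n * ⟪u, y⟫ ≤ t n * ‖u‖ := mul_le_mul_of_nonneg_left huy htn.le
      show -(t n * K) ≤ ⟪w0, y⟫
      rw [hK_def]
      nlinarith
    -- the measures converge to vol B / 2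
    have hanti : Antitone fun n => A n ∩ B := by
      intro n m hnm
      have htle : t m ≤ t n := by
        show (1:ℝ)/(m+1) ≤ 1/(n+1)
        have hcast : (n:ℝ) ≤ m := Nat.cast_le.2 hnm
        apply one_div_le_one_div_of_le
        · positivity
        · linarith
      rintro y ⟨h1, h2⟩
      refine ⟨?_, h2⟩
      simp only [hA_def, Set.mem_setOf_eq] at h1 ⊢
      have hmul : t m * K ≤ t n * K := mul_le_mul_of_nonneg_right htle hKpos.le
      linarith
    have hInter : (⋂ n, A n ∩ B) = {y : Euc d | 0 ≤ ⟪w0, y⟫} ∩ B := by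
      ext y
      simp only [Set.mem_iInter, Set.mem_inter_iff, hA_def, Set.mem_setOf_eq]
      constructor
      · intro h
        refine ⟨?_, (h 0).2⟩
        have hlim : Tendsto (fun n : ℕ => -(t n * K)) atTop (nhds 0) := by
          have : Tendsto (fun n : ℕ => t n) atTop (nhds 0) := by
            rw [ht_def]
            exact tendsto_one_div_add_atTop_nhds_zero_nat
          simpa using (this.mul_const K).neg
        exact le_of_tendsto' hlim fun n => (h n).1
      · rintro ⟨h1, h2⟩ n
        refine ⟨?_, h2⟩
        have hpos := mul_pos (htpos n) hKpos
        linarith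
    have htend : Tendsto (fun n => volume (A n ∩ B)) atTop (nhds (volume B / 2)) := by
      have h := tendsto_measure_iInter_atTop (μ := volume) (s := fun n => A n ∩ B)
        (fun n => (hAm n).nullMeasurableSet) hanti
        ⟨0, ne_top_of_le_ne_top hBtop (measure_mono Set.inter_subset_right)⟩
      rw [hInter, vol_half w0 hw0] at h
      exact h
    -- push through the affine map and toReal
    have hconst_ne_top : (2/3 : ℝ≥0∞) * (volume B)⁻¹ ≠ ⊤ :=
      ENNReal.mul_ne_top (ENNReal.div_lt_top (by simp) (by simp)).ne (ENNReal.inv_ne_top.2 hB0)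
    have htend2 : Tendsto (fun n => 2/3 * ((volume B)⁻¹ * volume (A n ∩ B))) atTop
        (nhds (3⁻¹ : ℝ≥0∞)) := by
      have h := ENNReal.Tendsto.const_mul (a := 2/3 * (volume B)⁻¹) htend
        (Or.inr hconst_ne_top)
      have heq : 2/3 * (volume B)⁻¹ * (volume B / 2) = 3⁻¹ := by
        rw [mul_assoc, hhalfval, h23]
      rw [heq] at h
      have h' : (fun n => 2/3 * ((volume B)⁻¹ * volume (A n ∩ B)))
          = fun n => 2/3 * (volume B)⁻¹ * volume (A n ∩ B) := by
        funext n; rw [mul_assoc]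
      rw [h']
      exact h
    have htend3 : Tendsto (fun n => (2/3 * ((volume B)⁻¹ * volume (A n ∩ B))).toReal) atTop
        (nhds (1/3 : ℝ)) := by
      have h := (ENNReal.tendsto_toReal (by simp : (3⁻¹ : ℝ≥0∞) ≠ ⊤)).comp htend2
      have h3 : ((3⁻¹ : ℝ≥0∞)).toReal = 1/3 := by simp
      rw [h3] at h
      exact h
    refine ge_of_tendsto' htend3 fun n => ?_
    have hstep : tukeyDepth x p ≤ (p {y : Euc d | 0 ≤ ⟪v n, y - x⟫}).toReal :=
      depth_le x (v n) (hvne n)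
    refine hstep.trans ?_
    have hnotmem : μ ∉ {y : Euc d | 0 ≤ ⟪v n, y - x⟫} := by
      simp only [Set.mem_setOf_eq, not_le]
      have h : ⟪v n, μ - x⟫ = -⟪v n, x - μ⟫ := by rw [← inner_neg_right, neg_sub]
      rw [h, ← hu_def, hvu n]
      have hpos := mul_pos (htpos n) hun
      linarith
    have hple : p {y : Euc d | 0 ≤ ⟪v n, y - x⟫}
        ≤ 2/3 * ((volume B)⁻¹ * volume (A n ∩ B)) := by
      rw [hpA_not _ (measHS (v n) x) hnotmem]
      exact mul_le_mul_right (mul_le_mul_right (measure_mono (hsubA n)) _) _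
    refine ENNReal.toReal_mono ?_ hple
    refine ENNReal.mul_ne_top (ENNReal.div_lt_top (by simp) (by simp)).ne ?_
    refine ENNReal.mul_ne_top (ENNReal.inv_ne_top.2 hB0) ?_
    exact ne_top_of_le_ne_top hBtop (measure_mono Set.inter_subset_right)
  · -- easy case : the orthogonal part of x is nonzero
    set w : Euc d := x - c • u with hw_def
    have hw0 : w ≠ 0 := hw
    have hwu : ⟪w, u⟫ = 0 := by rw [real_inner_comm]; exact hcu
    have hwx : ⟪w, x⟫ = ‖w‖^2 := by
      have hx_eq : x = w + c • u := by rw [hw_def]; abel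
      rw [hx_eq, inner_add_right, real_inner_self_eq_norm_sq, real_inner_smul_right, hwu]
      ring
    set s : ℝ := ‖w‖^2 / (-⟪u, x⟫) with hs_def
    have hspos : 0 < s := by
      apply div_pos
      · exact pow_pos (norm_pos_iff.mpr hw0) 2
      · linarith
    refine good (w + s • u) ?_ ?_
    · rw [inner_add_left, real_inner_smul_left, real_inner_self_eq_norm_sq, hwu,
        zero_add]
      exact mul_pos hspos hun
    · rw [inner_add_left, real_inner_smul_left, hwx]
      have h : s * ⟪u, x⟫ = -‖w‖^2 := by
        have ha : ⟪u, x⟫ ≠ 0 := ne_of_lt h0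
        rw [hs_def, div_mul_eq_mul_div, div_neg, mul_div_assoc, div_self ha, mul_one]
      rw [h]
      linarith

end
end

section
/- (Core of Theorem 4) Let h : [0, ∞) → [0, ∞) be a non-increasing function, and let p* and q be Borel probability measures on ℝ^d that are halfspace-symmetric with centers μ* and μ_q respectively, both satisfying the decay bound sup_{v ∈ ℝ^d, ‖v‖ ≤ 1} p({x : ⟨v, x − center⟩ > t}) ≤ h(t) for all t ≥ 0. Suppose TV~(p*, q) ≤ 2ε with ε < 1/2. Then for every t ≥ 0 with h(t) < 1/2 − ε, we have ‖μ_q − μ*‖ ≤ 2t; i.e., ‖μ_q − μ*‖ ≤ 2·h^{-1}(1/2 − ε), where h^{-1}(y) = inf{t ≥ 0 : h(t) < y}. -/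
open MeasureTheory
open scoped RealInnerProductSpace ENNReal

noncomputable section

lemma toReal_prob_le_one' {α : Type*} [MeasurableSpace α] {m : Measure α}
    [IsProbabilityMeasure m] (S : Set α) : (m S).toReal ≤ 1 := by
  simpa using ENNReal.toReal_mono ENNReal.one_ne_top (prob_le_one (μ := m) (s := S))

/-- **Core of Theorem 4.** Let `h` be non-increasing and
non-negative on `[0, ∞)`, and let `p*` and `q` be halfspace-symmetric with
centers `μ*`, `μ_q`, both satisfying the decay bound `h`. If
`TV~(p*, q) ≤ 2ε` with `ε < 1/2`, then for every `t ≥ 0` with `h(t) < 1/2 − ε`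
we have `‖μ_q − μ*‖ ≤ 2t` (i.e. `‖μ_q − μ*‖ ≤ 2 h⁻¹(1/2 − ε)`). -/
theorem halfspace_projection_core {d : ℕ}
    (h : ℝ → ℝ) (hmono : AntitoneOn h (Set.Ici 0)) (hnonneg : ∀ t, 0 ≤ t → 0 ≤ h t)
    (pstar q : Measure (Euc d))
    [IsProbabilityMeasure pstar] [IsProbabilityMeasure q]
    (μstar μq : Euc d)
    (hsymp : IsHalfspaceSymmetric pstar μstar)
    (hsymq : IsHalfspaceSymmetric q μq)
    (hdecp : ∀ t, 0 ≤ t → decay pstar μstar t ≤ h t)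
    (hdecq : ∀ t, 0 ≤ t → decay q μq t ≤ h t)
    (ε : ℝ) (hε : ε < 1 / 2)
    (htv : halfspaceDist pstar q ≤ 2 * ε) :
    ∀ t : ℝ, 0 ≤ t → h t < 1 / 2 - ε → ‖μq - μstar‖ ≤ 2 * t := by
  intro t ht hht
  by_contra hcon
  push_neg at hcon
  set Δ : Euc d := μq - μstar with hΔ
  set r : ℝ := ‖Δ‖ with hr
  have hr2t : 2 * t < r := hcon
  have hrpos : 0 < r := lt_of_le_of_lt (by positivity) hr2t
  set v : Euc d := r⁻¹ • Δ with hv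
  have hvnorm : ‖v‖ = 1 := by
    rw [hv, norm_smul, norm_inv, Real.norm_eq_abs, abs_of_pos hrpos]
    field_simp
    exact hr.symm
  have hvΔ : ⟪v, Δ⟫ = r := by
    rw [hv, real_inner_smul_left, real_inner_self_eq_norm_sq, ← hr]
    field_simp
  set s : ℝ := ⟪v, μstar⟫ + r / 2 with hs
  set A : Set (Euc d) := {x | s ≤ ⟪v, x⟫} with hA
  have hAmeas : MeasurableSet A :=
    (isClosed_le continuous_const (Continuous.inner continuous_const continuous_id)).measurableSet
  clear_value A s v r Δ
  have hsub1 : A ⊆ {x | t < ⟪v, x - μstar⟫} := by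
    intro x hx
    simp only [hA, Set.mem_setOf_eq] at hx ⊢
    rw [inner_sub_right]
    linarith
  have hμqv : ⟪v, μq⟫ = ⟪v, μstar⟫ + r := by
    have h1 := hvΔ
    rw [hΔ, inner_sub_right] at h1
    linarith
  have hsub2 : Aᶜ ⊆ {x | t < ⟪-v, x - μq⟫} := by
    intro x hx
    simp only [hA, Set.mem_compl_iff, Set.mem_setOf_eq, not_le] at hx
    simp only [Set.mem_setOf_eq, inner_neg_left, inner_sub_right]
    linarith
  have hp : (pstar A).toReal ≤ h t := by
    have h1 : (pstar A).toReal ≤ (pstar {x | t < ⟪v, x - μstar⟫}).toReal :=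
      ENNReal.toReal_mono (measure_ne_top _ _) (measure_mono hsub1)
    have h2 : (pstar {x | t < ⟪v, x - μstar⟫}).toReal ≤ decay pstar μstar t := by
      have hbd : BddAbove (Set.range fun w : {w : Euc d // ‖w‖ ≤ 1} =>
          (pstar {x | t < ⟪(w : Euc d), x - μstar⟫}).toReal) :=
        ⟨1, by rintro _ ⟨w, rfl⟩; exact toReal_prob_le_one' _⟩
      exact le_ciSup hbd ⟨v, hvnorm.le⟩
    exact (h1.trans h2).trans (hdecp t ht)
  have hqc : (q Aᶜ).toReal ≤ h t := by
    have h1 : (q Aᶜ).toReal ≤ (q {x | t < ⟪-v, x - μq⟫}).toReal :=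
      ENNReal.toReal_mono (measure_ne_top _ _) (measure_mono hsub2)
    have h2 : (q {x | t < ⟪-v, x - μq⟫}).toReal ≤ decay q μq t := by
      have hbd : BddAbove (Set.range fun w : {w : Euc d // ‖w‖ ≤ 1} =>
          (q {x | t < ⟪(w : Euc d), x - μq⟫}).toReal) :=
        ⟨1, by rintro _ ⟨w, rfl⟩; exact toReal_prob_le_one' _⟩
      exact le_ciSup hbd ⟨-v, by rw [norm_neg, hvnorm]⟩
    exact (h1.trans h2).trans (hdecq t ht)
  have hqA : 1 - h t ≤ (q A).toReal := by
    have hc : (q Aᶜ).toReal = 1 - (q A).toReal := by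
      rw [prob_compl_eq_one_sub hAmeas,
        ENNReal.toReal_sub_of_le prob_le_one ENNReal.one_ne_top, ENNReal.toReal_one]
    linarith
  have hterm : |(pstar A).toReal - (q A).toReal| ≤ halfspaceDist pstar q := by
    have hbd : BddAbove (Set.range fun vt : Euc d × ℝ =>
        |(pstar {x | vt.2 ≤ ⟪vt.1, x⟫}).toReal - (q {x | vt.2 ≤ ⟪vt.1, x⟫}).toReal|) := by
      refine ⟨1, ?_⟩
      rintro _ ⟨vt, rfl⟩
      have h1 := toReal_prob_le_one' (m := pstar) {x | vt.2 ≤ ⟪vt.1, x⟫}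
      have h2 := toReal_prob_le_one' (m := q) {x | vt.2 ≤ ⟪vt.1, x⟫}
      have h3 : (0:ℝ) ≤ (pstar {x | vt.2 ≤ ⟪vt.1, x⟫}).toReal := ENNReal.toReal_nonneg
      have h4 : (0:ℝ) ≤ (q {x | vt.2 ≤ ⟪vt.1, x⟫}).toReal := ENNReal.toReal_nonneg
      rw [abs_sub_le_iff]
      constructor <;> linarith
    have h5 := le_ciSup hbd (v, s)
    rw [hA, halfspaceDist]
    simpa using h5
  have hge : (q A).toReal - (pstar A).toReal ≤ |(pstar A).toReal - (q A).toReal| := by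
    rw [abs_sub_comm]; exact le_abs_self _
  linarith


end
end

section
/- (Gaussian corollary of Theorem 2) Let d ≥ 1, let θ ∈ ℝ^d, and let p* = N(θ, I_d) be the standard Gaussian measure on ℝ^d with mean θ and identity covariance (the product of d one-dimensional standard Gaussians shifted by θ). Let p be a Borel probability measure on ℝ^d with TV(p, p*) ≤ ε where ε < 1/4, and let x be a Tukey median of p. Then Φ(‖x − θ‖) ≤ 1/2 + 2ε, where Φ is the cumulative distribution function of the one-dimensional standard normal distribution; in particular the Tukey median attains estimation error O(ε) for robust Gaussian mean estimation. -/
open MeasureTheory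
open scoped RealInnerProductSpace ENNReal

noncomputable section

open ProbabilityTheory Set

lemma lintegral_pi_prod {n : ℕ} (μ : Measure ℝ) [SigmaFinite μ]
    (f : Fin n → ℝ → ℝ≥0∞) (hf : ∀ i, Measurable (f i)) :
    ∫⁻ x, ∏ i, f i (x i) ∂(Measure.pi fun _ : Fin n => μ) = ∏ i, ∫⁻ t, f i t ∂μ := by
  induction n with
  | zero => simp [Measure.pi_univ]
  | succ n ih =>
    have h := (measurePreserving_piFinSuccAbove (fun _ : Fin (n + 1) => μ) 0).symm
    have hg : Measurable (fun x : Fin (n + 1) → ℝ => ∏ i, f i (x i)) :=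
      Finset.measurable_prod _ fun i _ => (hf i).comp (measurable_pi_apply i)
    have step := h.lintegral_comp hg
    rw [← step]
    have : ∀ y : ℝ × (Fin n → ℝ),
        (∏ i, f i (((MeasurableEquiv.piFinSuccAbove (fun _ : Fin (n+1) => ℝ) 0).symm y) i))
        = f 0 y.1 * ∏ j : Fin n, f j.succ (y.2 j) := by
      intro y
      rw [Fin.prod_univ_succ]
      simp [MeasurableEquiv.piFinSuccAbove_symm_apply, Fin.insertNthEquiv,
        Fin.insertNth_zero, Fin.zero_succAbove]
    simp_rw [this]
    rw [lintegral_prod_mul (f := f 0) (g := fun w : Fin n → ℝ => ∏ j, f j.succ (w j))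
      (hf 0).aemeasurable
      (Finset.measurable_prod _ fun j _ => (hf j.succ).comp (measurable_pi_apply j)).aemeasurable,
      ih (fun j => f j.succ) (fun j => hf j.succ), Fin.prod_univ_succ]

lemma pi_gauss_eq (d : ℕ) :
    (Measure.pi fun _ : Fin d => gaussianReal 0 1)
      = (volume : Measure (Fin d → ℝ)).withDensity
          (fun x => ∏ i, gaussianPDF 0 1 (x i)) := by
  refine Measure.pi_eq fun s hs => ?_
  have hmeas : ∀ i : Fin d, Measurable fun t : ℝ => (s i).indicator (gaussianPDF 0 1) t :=
    fun i => (measurable_gaussianPDF 0 1).indicator (hs i)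
  rw [withDensity_apply _ (MeasurableSet.univ_pi hs)]
  have : ∫⁻ x in univ.pi s, ∏ i, gaussianPDF 0 1 (x i) ∂(volume : Measure (Fin d → ℝ))
      = ∫⁻ x, ∏ i, (s i).indicator (gaussianPDF 0 1) (x i) ∂(volume : Measure (Fin d → ℝ)) := by
    rw [← lintegral_indicator (MeasurableSet.univ_pi hs) _]
    congr 1
    ext x
    by_cases hx : x ∈ univ.pi s
    · rw [indicator_of_mem hx]
      exact Finset.prod_congr rfl fun i _ => (indicator_of_mem (hx i (mem_univ i)) _).symm
    · rw [indicator_of_notMem hx]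
      rw [Set.mem_univ_pi] at hx
      push_neg at hx
      obtain ⟨i, hi⟩ := hx
      exact (Finset.prod_eq_zero (Finset.mem_univ i) (indicator_of_notMem hi _)).symm
  rw [this]
  rw [volume_pi, lintegral_pi_prod volume _ hmeas]
  refine Finset.prod_congr rfl fun i _ => ?_
  rw [lintegral_indicator (hs i) _, gaussianReal_of_var_ne_zero 0 one_ne_zero,
    withDensity_apply _ (hs i)]

lemma map_withDensity_equiv {α β : Type*} [MeasurableSpace α] [MeasurableSpace β]
    {μ : Measure α} {ν : Measure β} (e : α ≃ᵐ β) (h : MeasurePreserving e μ ν)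
    {g : β → ℝ≥0∞} (hg : Measurable g) :
    Measure.map e (μ.withDensity (fun a => g (e a))) = ν.withDensity g := by
  ext A hA
  rw [Measure.map_apply e.measurable hA, withDensity_apply _ (hA.preimage e.measurable),
    withDensity_apply _ hA, ← h.map_eq, setLIntegral_map hA hg e.measurable]

/-- the centered standard gaussian on Euclidean space -/

def gaussEuc (d : ℕ) : Measure (Euc d) :=
  Measure.map (MeasurableEquiv.toLp 2 (Fin d → ℝ))
    (Measure.pi fun _ : Fin d => gaussianReal 0 1)

def gaussDens (d : ℕ) (y : Euc d) : ℝ≥0∞ :=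
  ENNReal.ofReal ((Real.sqrt (2 * Real.pi))⁻¹ ^ d * Real.exp (- ‖y‖ ^ 2 / 2))

lemma gaussDens_eq_prod {d : ℕ} (y : Euc d) :
    gaussDens d y = ∏ i, gaussianPDF 0 1 (y i) := by
  rw [gaussDens, gaussianPDF_def]
  rw [← ENNReal.ofReal_prod_of_nonneg (fun i _ => gaussianPDFReal_nonneg 0 1 (y i))]
  congr 1
  simp only [gaussianPDFReal, NNReal.coe_one, mul_one, sub_zero]
  rw [Finset.prod_mul_distrib, Finset.prod_const, ← Real.exp_sum]
  congr 1
  · simp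
  · rw [EuclideanSpace.norm_eq, Real.sq_sqrt (by positivity)]
    simp only [Real.norm_eq_abs, sq_abs, Finset.sum_neg_distrib, neg_div, Finset.sum_div]

lemma gaussDens_measurable (d : ℕ) : Measurable (gaussDens d) :=
  by unfold gaussDens; fun_prop

lemma gaussEuc_eq_withDensity (d : ℕ) :
    gaussEuc d = (volume : Measure (Euc d)).withDensity (gaussDens d) := by
  rw [gaussEuc, pi_gauss_eq]
  have := map_withDensity_equiv (MeasurableEquiv.toLp 2 (Fin d → ℝ))
    (EuclideanSpace.volume_preserving_symm_measurableEquiv_toLp (Fin d)).symm (gaussDens_measurable d)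
  rw [← this]
  congr 1
  congr 1
  ext x
  rw [gaussDens_eq_prod]
  simp [MeasurableEquiv.coe_toLp, PiLp.toLp_apply]

lemma gaussEuc_rot {d : ℕ} (e : Euc d ≃ₗᵢ[ℝ] Euc d) :
    Measure.map e (gaussEuc d) = gaussEuc d := by
  rw [gaussEuc_eq_withDensity]
  have hme : MeasurePreserving (e.toHomeomorph.toMeasurableEquiv) volume volume :=
    e.measurePreserving
  have h := map_withDensity_equiv e.toHomeomorph.toMeasurableEquiv hme (gaussDens_measurable d)
  have hcomp : (fun a => gaussDens d (e.toHomeomorph.toMeasurableEquiv a)) = gaussDens d := by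
    ext a
    simp only [Homeomorph.toMeasurableEquiv_coe, LinearIsometryEquiv.coe_toHomeomorph]
    rw [gaussDens, gaussDens, e.norm_map]
  rw [hcomp] at h
  exact h

lemma measurableSet_halfspace {d : ℕ} (u : Euc d) (c : Euc d) (t : ℝ) :
    MeasurableSet {y : Euc d | t ≤ ⟪u, y - c⟫} := by
  have hcont : Continuous fun y : Euc d => ⟪u, y - c⟫ :=
    continuous_const.inner (continuous_id.sub continuous_const)
  exact measurableSet_le measurable_const hcont.measurable

lemma gaussEuc_halfspace {d : ℕ} (hd : 1 ≤ d) (u : Euc d) (hu : ‖u‖ = 1) (t : ℝ) :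
    gaussEuc d {y : Euc d | t ≤ ⟪u, y⟫} = gaussianReal 0 1 (Ici t) := by
  classical
  set i₀ : Fin d := ⟨0, hd⟩
  set b : Euc d := EuclideanSpace.single i₀ (1 : ℝ) with hb
  have hbnorm : ‖b‖ = ‖u‖ := by
    rw [hu, hb, EuclideanSpace.norm_single, norm_one]
  set e : Euc d ≃ₗᵢ[ℝ] Euc d := Submodule.reflection (ℝ ∙ (b - u))ᗮ with he
  have heb : e b = u := Submodule.reflection_sub hbnorm
  have hmeas : MeasurableSet {y : Euc d | t ≤ ⟪u, y⟫} := by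
    have := measurableSet_halfspace u 0 t
    simpa using this
  have hrot := gaussEuc_rot e
  have hpre : (⇑e) ⁻¹' {y : Euc d | t ≤ ⟪u, y⟫} = {y : Euc d | t ≤ y i₀} := by
    ext y
    simp only [mem_preimage, mem_setOf_eq]
    rw [← heb, LinearIsometryEquiv.inner_map_map, hb, EuclideanSpace.inner_single_left]
    simp
  have hemeas : Measurable (⇑e) := e.continuous.measurable
  calc gaussEuc d {y : Euc d | t ≤ ⟪u, y⟫}
      = (Measure.map e (gaussEuc d)) {y : Euc d | t ≤ ⟪u, y⟫} := by rw [hrot]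
    _ = gaussEuc d {y : Euc d | t ≤ y i₀} := by
        rw [Measure.map_apply hemeas hmeas, hpre]
    _ = (Measure.pi fun _ : Fin d => gaussianReal 0 1) {z : Fin d → ℝ | t ≤ z i₀} := by
        have hyi : Measurable fun y : Euc d => y i₀ :=
          (measurable_pi_apply i₀).comp (MeasurableEquiv.toLp 2 (Fin d → ℝ)).symm.measurable
        rw [gaussEuc, Measure.map_apply (MeasurableEquiv.measurable _)
          (measurableSet_le measurable_const hyi)]
        rfl
    _ = gaussianReal 0 1 (Ici t) := by
        have : {z : Fin d → ℝ | t ≤ z i₀}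
            = Set.pi univ (Function.update (fun _ : Fin d => (univ : Set ℝ)) i₀ (Ici t)) := by
          rw [Set.univ_pi_update_univ]
          rfl
        rw [this, Measure.pi_pi]
        rw [Finset.prod_eq_single i₀ (fun j _ hj => by simp [Function.update_of_ne hj])
          (fun h => absurd (Finset.mem_univ i₀) h)]
        simp

lemma pi_gauss_shift {d : ℕ} (θ : Euc d) :
    (Measure.pi fun i : Fin d => gaussianReal (θ i) 1)
      = Measure.map (fun z : Fin d → ℝ => fun i => z i + θ i)
          (Measure.pi fun _ : Fin d => gaussianReal 0 1) := by
  have hshift : Measurable fun z : Fin d → ℝ => (fun i => z i + θ i) :=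
    measurable_pi_lambda _ fun i => (measurable_pi_apply i).add_const _
  refine (Measure.pi_eq fun s hs => ?_)
  rw [Measure.map_apply hshift (MeasurableSet.univ_pi hs)]
  have : (fun z : Fin d → ℝ => fun i => z i + θ i) ⁻¹' (univ.pi s)
      = univ.pi (fun i => (fun t => t + θ i) ⁻¹' s i) := by
    ext z; simp [Set.mem_pi]
  rw [this, Measure.pi_pi]
  refine Finset.prod_congr rfl fun i _ => ?_
  have := gaussianReal_map_add_const (μ := 0) (v := 1) (θ i)
  rw [zero_add] at this
  rw [← this, Measure.map_apply (measurable_add_const _) (hs i)]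

lemma pstar_halfspace {d : ℕ} (hd : 1 ≤ d) (θ : Euc d) (v : Euc d) (hv : v ≠ 0) (c : Euc d) :
    (Measure.map (MeasurableEquiv.toLp 2 (Fin d → ℝ))
        (Measure.pi fun i : Fin d => ProbabilityTheory.gaussianReal (θ i) 1))
      {y : Euc d | 0 ≤ ⟪v, y - c⟫}
      = gaussianReal 0 1 (Ici ⟪‖v‖⁻¹ • v, c - θ⟫) := by
  have hvnorm : (0:ℝ) < ‖v‖ := norm_pos_iff.mpr hv
  set u : Euc d := ‖v‖⁻¹ • v with hu
  have hunorm : ‖u‖ = 1 := by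
    rw [hu, norm_smul, norm_inv, norm_norm, inv_mul_cancel₀ hvnorm.ne']
  have hshift : Measurable fun z : Fin d → ℝ => (fun i : Fin d => z i + θ i) :=
    measurable_pi_lambda _ fun i => (measurable_pi_apply i).add_const _
  rw [pi_gauss_shift θ,
    Measure.map_apply (MeasurableEquiv.measurable _) (measurableSet_halfspace v c 0),
    Measure.map_apply hshift
      ((measurableSet_halfspace v c 0).preimage (MeasurableEquiv.measurable _))]
  have hset : (fun z : Fin d → ℝ => fun i => z i + θ i) ⁻¹'
      ((MeasurableEquiv.toLp 2 (Fin d → ℝ)) ⁻¹' {y : Euc d | 0 ≤ ⟪v, y - c⟫})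
      = (MeasurableEquiv.toLp 2 (Fin d → ℝ)) ⁻¹' {y : Euc d | ⟪u, c - θ⟫ ≤ ⟪u, y⟫} := by
    ext z
    simp only [mem_preimage, mem_setOf_eq]
    have hadd : ((MeasurableEquiv.toLp 2 (Fin d → ℝ)) fun i => z i + θ i)
        = (MeasurableEquiv.toLp 2 (Fin d → ℝ)) z + θ := rfl
    rw [hadd]
    have h1 : ⟪v, (MeasurableEquiv.toLp 2 (Fin d → ℝ)) z + θ - c⟫
        = ⟪v, (MeasurableEquiv.toLp 2 (Fin d → ℝ)) z⟫ - ⟪v, c - θ⟫ := by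
      rw [← inner_sub_right]
      congr 1
      abel
    rw [h1, sub_nonneg, hu, real_inner_smul_left, real_inner_smul_left]
    constructor
    · intro h; exact mul_le_mul_of_nonneg_left h (by positivity)
    · intro h
      have := mul_le_mul_of_nonneg_left h hvnorm.le
      rwa [← mul_assoc, ← mul_assoc, mul_inv_cancel₀ hvnorm.ne', one_mul, one_mul] at this
  rw [hset]
  have := gaussEuc_halfspace hd u hunorm ⟪u, c - θ⟫
  rw [gaussEuc, Measure.map_apply (MeasurableEquiv.measurable _)] at this
  · exact this
  · have := measurableSet_halfspace u 0 ⟪u, c - θ⟫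
    simpa using this

def Phi (r : ℝ) : ℝ := ∫ s in Iic r, Real.exp (-s ^ 2 / 2) / Real.sqrt (2 * Real.pi)

lemma gaussianPDFReal_std (s : ℝ) :
    gaussianPDFReal 0 1 s = Real.exp (-s ^ 2 / 2) / Real.sqrt (2 * Real.pi) := by
  rw [gaussianPDFReal]
  simp only [NNReal.coe_one, mul_one, sub_zero]
  rw [div_eq_inv_mul, div_eq_inv_mul]

lemma gauss_Iic (r : ℝ) : (gaussianReal 0 1 (Iic r)).toReal = Phi r := by
  rw [gaussianReal_apply_eq_integral 0 one_ne_zero,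
    ENNReal.toReal_ofReal (setIntegral_nonneg measurableSet_Iic
      fun s _ => gaussianPDFReal_nonneg 0 1 s), Phi]
  exact setIntegral_congr_fun measurableSet_Iic fun s _ => gaussianPDFReal_std s

lemma gauss_Iio (r : ℝ) : gaussianReal 0 1 (Iio r) = gaussianReal 0 1 (Iic r) := by
  have hsing : gaussianReal 0 1 {r} = 0 :=
    gaussianReal_absolutelyContinuous 0 one_ne_zero (Real.volume_singleton)
  have h : Iic r = Iio r ∪ {r} := by
    ext z; simp [le_iff_lt_or_eq]
  rw [h]
  refine le_antisymm (measure_mono subset_union_left) ?_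
  calc gaussianReal 0 1 (Iio r ∪ {r}) ≤ gaussianReal 0 1 (Iio r) + gaussianReal 0 1 {r} :=
        measure_union_le _ _
    _ = gaussianReal 0 1 (Iio r) := by rw [hsing, add_zero]

lemma gauss_Ici (r : ℝ) : (gaussianReal 0 1 (Ici r)).toReal = 1 - Phi r := by
  have : IsProbabilityMeasure (gaussianReal (0:ℝ) (1:NNReal)) := inferInstance
  have hcompl : Ici r = (Iio r)ᶜ := by simp
  rw [hcompl, prob_compl_eq_one_sub measurableSet_Iio, gauss_Iio]
  rw [ENNReal.toReal_sub_of_le prob_le_one ENNReal.one_ne_top, ENNReal.toReal_one, gauss_Iic]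

lemma gauss_symm : (gaussianReal (0:ℝ) (1:NNReal)).map (fun x : ℝ => -x)
    = gaussianReal 0 1 := by
  have h := gaussianReal_map_const_mul (μ := (0:ℝ)) (v := 1) (-1 : ℝ)
  have h2 : (⟨(-1:ℝ)^2, sq_nonneg _⟩ : NNReal) * 1 = 1 := by
    ext; norm_num
  simp only [mul_zero] at h
  rw [show (NNReal.mk ((-1:ℝ)^2) (sq_nonneg _)) * 1 = 1 from h2] at h
  have h3 : ((-1 : ℝ) * ·) = (fun x : ℝ => -x) := by ext x; ring
  rwa [h3] at h

lemma Phi_zero : Phi 0 = 1 / 2 := by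
  have h1 : gaussianReal (0:ℝ) (1:NNReal) (Ici 0) = gaussianReal 0 1 (Iic 0) := by
    conv_lhs => rw [← gauss_symm]
    rw [Measure.map_apply measurable_neg measurableSet_Ici]
    congr 1
    ext x
    simp
  have h2 := gauss_Ici 0
  rw [h1, gauss_Iic] at h2
  linarith

lemma tv_pair_bound {d : ℕ} (p q : Measure (Euc d)) [IsProbabilityMeasure p]
    [IsProbabilityMeasure q] {ε : ℝ} (h : tvDist p q ≤ ε)
    {A : Set (Euc d)} (hA : MeasurableSet A) :
    (p A).toReal ≤ (q A).toReal + ε ∧ (q A).toReal ≤ (p A).toReal + ε := by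
  have hbdd : BddAbove (Set.range fun B : {A : Set (Euc d) // MeasurableSet A} =>
      ((p (B : Set (Euc d))).toReal - (q (B : Set (Euc d))).toReal)) := by
    refine ⟨1, ?_⟩
    rintro _ ⟨B, rfl⟩
    have h1 : (p (B : Set (Euc d))).toReal ≤ 1 := by
      simpa using ENNReal.toReal_mono ENNReal.one_ne_top prob_le_one
    have h2 : 0 ≤ (q (B : Set (Euc d))).toReal := ENNReal.toReal_nonneg
    simp only
    linarith
  have key : ∀ (B : Set (Euc d)), MeasurableSet B →
      (p B).toReal - (q B).toReal ≤ ε := by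
    intro B hB
    exact le_trans (le_ciSup hbdd (⟨B, hB⟩ : {A : Set (Euc d) // MeasurableSet A})) h
  have hcompl : ∀ (r : Measure (Euc d)), IsProbabilityMeasure r →
      (r Aᶜ).toReal = 1 - (r A).toReal := by
    intro r hr
    rw [prob_compl_eq_one_sub hA,
      ENNReal.toReal_sub_of_le prob_le_one ENNReal.one_ne_top, ENNReal.toReal_one]
  have k1 := key A hA
  have k2 := key Aᶜ hA.compl
  rw [hcompl p inferInstance, hcompl q inferInstance] at k2
  exact ⟨by linarith, by linarith⟩

lemma tvDist_nonneg {d : ℕ} (p q : Measure (Euc d)) [IsProbabilityMeasure p]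
    [IsProbabilityMeasure q] : 0 ≤ tvDist p q := by
  have hbdd : BddAbove (Set.range fun B : {A : Set (Euc d) // MeasurableSet A} =>
      ((p (B : Set (Euc d))).toReal - (q (B : Set (Euc d))).toReal)) := by
    refine ⟨1, ?_⟩
    rintro _ ⟨B, rfl⟩
    have h1 : (p (B : Set (Euc d))).toReal ≤ 1 := by
      simpa using ENNReal.toReal_mono ENNReal.one_ne_top prob_le_one
    have h2 : 0 ≤ (q (B : Set (Euc d))).toReal := ENNReal.toReal_nonneg
    simp only
    linarith
  have := le_ciSup hbdd (⟨∅, MeasurableSet.empty⟩ : {A : Set (Euc d) // MeasurableSet A})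
  simp at this
  exact this

/-- **Gaussian corollary of Theorem 2.** Let `p* = N(θ, I_d)` be
the standard Gaussian on `ℝ^d` with mean `θ` (the product of `d` shifted
one-dimensional standard Gaussians), let `TV(p, p*) ≤ ε < 1/4`, and let `x` be
a Tukey median of `p`. Then `Φ(‖x − θ‖) ≤ 1/2 + 2ε`, where `Φ` is the standard
normal CDF; in particular the Tukey median attains error `O(ε)`. -/
theorem tukey_median_gaussian {d : ℕ} (hd : 1 ≤ d) (θ : Euc d)
    (pstar : Measure (Euc d))
    (hpstar : pstar =
      Measure.map (MeasurableEquiv.toLp 2 (Fin d → ℝ))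
        (Measure.pi fun i : Fin d => ProbabilityTheory.gaussianReal (θ i) 1))
    (p : Measure (Euc d)) [IsProbabilityMeasure p]
    (ε : ℝ) (hε : ε < 1 / 4) (htv : tvDist p pstar ≤ ε)
    (x : Euc d) (hx : IsTukeyMedian x p) :
    (∫ s in Set.Iic ‖x - θ‖, Real.exp (-s ^ 2 / 2) / Real.sqrt (2 * Real.pi))
      ≤ 1 / 2 + 2 * ε := by
  have hps : IsProbabilityMeasure pstar := by
    rw [hpstar]
    exact Measure.isProbabilityMeasure_map (Measurable.aemeasurable (MeasurableEquiv.measurable _))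
  have hε0 : 0 ≤ ε := le_trans (tvDist_nonneg p pstar) htv
  show Phi ‖x - θ‖ ≤ 1 / 2 + 2 * ε
  by_cases hxθ : x = θ
  · rw [hxθ, sub_self, norm_zero, Phi_zero]
    linarith
  -- lower bound on depth at θ
  have hne : Nonempty {v : Euc d // v ≠ 0} := by
    refine ⟨⟨EuclideanSpace.single ⟨0, hd⟩ (1 : ℝ), fun h0 => ?_⟩⟩
    have hn : ‖EuclideanSpace.single (⟨0, hd⟩ : Fin d) (1 : ℝ)‖ = 1 := by
      rw [EuclideanSpace.norm_single, norm_one]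
    rw [h0, norm_zero] at hn
    norm_num at hn
  have hlow : 1 / 2 - ε ≤ tukeyDepth θ p := by
    rw [tukeyDepth]
    refine le_ciInf fun w => ?_
    obtain ⟨v, hv⟩ := w
    have hmeas := measurableSet_halfspace v θ 0
    have hq : (pstar {y : Euc d | 0 ≤ ⟪v, y - θ⟫}).toReal = 1 / 2 := by
      rw [hpstar, pstar_halfspace hd θ v hv θ, sub_self, inner_zero_right, gauss_Ici, Phi_zero]
      norm_num
    have h2 := (tv_pair_bound p pstar htv hmeas).2
    simp only
    rw [hq] at h2
    linarith
  have hmono := hx θ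
  -- upper bound on depth at x
  set v : Euc d := x - θ with hvdef
  have hv : v ≠ 0 := sub_ne_zero.mpr hxθ
  have hup : tukeyDepth x p ≤ (p {y : Euc d | 0 ≤ ⟪v, y - x⟫}).toReal := by
    rw [tukeyDepth]
    exact ciInf_le ⟨0, by rintro _ ⟨w, rfl⟩; exact ENNReal.toReal_nonneg⟩
      (⟨v, hv⟩ : {v : Euc d // v ≠ 0})
  have hval : (pstar {y : Euc d | 0 ≤ ⟪v, y - x⟫}).toReal = 1 - Phi ‖x - θ‖ := by
    rw [hpstar, pstar_halfspace hd θ v hv x]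
    have hinner : ⟪‖v‖⁻¹ • v, x - θ⟫ = ‖x - θ‖ := by
      rw [← hvdef, real_inner_smul_left, real_inner_self_eq_norm_sq, sq, ← mul_assoc,
        inv_mul_cancel₀ (norm_ne_zero_iff.mpr hv), one_mul, hvdef]
    rw [hinner, gauss_Ici]
  have h1 := (tv_pair_bound p pstar htv (measurableSet_halfspace v x 0)).1
  rw [hval] at h1
  linarith


end
end
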